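/- arXiv:2305.00372 — 6 statements merged into one kernel-verified Lean document; each statement's English description precedes it below -/
import Mathlib

section
/- Let X be a core compactly generated space. Then the standard ω-well-filterification X^{ω-w} of X is again core compactly generated. -/
open Set TopologicalSpace

universe u

section OrderDefs

variable {X : Type u}

/-- `U` is an upper set with respect to the relation `le`. -/
def IsUpperSetWrt (le : X → X → Prop) (U : Set X) : Prop :=
  ∀ ⦃x⦄, x ∈ U → ∀ ⦃y⦄, le x y → y ∈ U

/-- `s` is an upper bound of `D` with respect to `le`. -/
def IsUBWrt (le : X → X → Prop) (D : Set X) (s : X) : Prop := ∀ d ∈ D, le d s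

/-- `s` is a least upper bound (supremum) of `D` with respect to `le`. -/
def IsSupWrt (le : X → X → Prop) (D : Set X) (s : X) : Prop :=
  IsUBWrt le D s ∧ ∀ t, IsUBWrt le D t → le s t

/-- `D` is a (nonempty) directed subset with respect to `le`. -/
def DirectedSubset (le : X → X → Prop) (D : Set X) : Prop :=
  D.Nonempty ∧ ∀ a ∈ D, ∀ b ∈ D, ∃ c ∈ D, le a c ∧ le b c

/-- `U` is Scott open with respect to `le`: an upper set inaccessible by directed suprema. -/
def ScottOpenWrt (le : X → X → Prop) (U : Set X) : Prop :=
  IsUpperSetWrt le U ∧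
    ∀ D, DirectedSubset le D → ∀ s, IsSupWrt le D s → s ∈ U → (D ∩ U).Nonempty

/-- The Scott topology determined by the relation `le`. -/
def scottTop (le : X → X → Prop) : TopologicalSpace X where
  IsOpen := ScottOpenWrt le
  isOpen_univ := by
    refine ⟨fun x _ y _ => trivial, fun D hD s _ _ => ?_⟩
    obtain ⟨d, hd⟩ := hD.1
    exact ⟨d, hd, trivial⟩
  isOpen_inter := by
    rintro U V ⟨hUup, hUd⟩ ⟨hVup, hVd⟩
    refine ⟨fun x hx y hxy => ⟨hUup hx.1 hxy, hVup hx.2 hxy⟩, ?_⟩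
    rintro D hD s hs ⟨hsU, hsV⟩
    obtain ⟨a, haD, haU⟩ := hUd D hD s hs hsU
    obtain ⟨b, hbD, hbV⟩ := hVd D hD s hs hsV
    obtain ⟨c, hcD, hac, hbc⟩ := hD.2 a haD b hbD
    exact ⟨c, hcD, hUup haU hac, hVup hbV hbc⟩
  isOpen_sUnion := by
    intro S hS
    refine ⟨fun x hx y hxy => ?_, ?_⟩
    · obtain ⟨U, hU, hxU⟩ := hx
      exact ⟨U, hU, (hS U hU).1 hxU hxy⟩
    · rintro D hD s hs ⟨U, hU, hsU⟩
      obtain ⟨d, hdD, hdU⟩ := (hS U hU).2 D hD s hs hsU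
      exact ⟨d, hdD, U, hU, hdU⟩

end OrderDefs

section TopDefs

variable {X : Type u} [TopologicalSpace X]

/-- The specialization order of a topological space: `x ≤ y` iff `x ∈ cl {y}`. -/
def specLE (x y : X) : Prop := x ∈ closure ({y} : Set X)

/-- The upward closure of `A` in the specialization order. -/
def upSet (A : Set X) : Set X := {y | ∃ a ∈ A, specLE a y}

/-- `V` is way below `U`: every open cover of `U` admits a finite subfamily covering `V`. -/
def WayBelow (V U : Set X) : Prop :=
  ∀ S : Set (Set X), (∀ W ∈ S, IsOpen W) → U ⊆ ⋃₀ S →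
    ∃ F : Finset (Set X), ↑F ⊆ S ∧ V ⊆ ⋃₀ (F : Set (Set X))

/-- A space is core compact if its lattice of open sets is continuous, i.e. every open
set is the union of the open sets way below it. -/
def CoreCompact (X : Type u) [TopologicalSpace X] : Prop :=
  ∀ U : Set X, IsOpen U → ∀ x ∈ U, ∃ V : Set X, IsOpen V ∧ x ∈ V ∧ WayBelow V U

/-- `V` is open in the core compactly generated topology:
preimages under every continuous map from a core compact space are open. -/
def ccgOpen (X : Type u) [TopologicalSpace X] (V : Set X) : Prop :=
  ∀ (C : Type u) (tC : TopologicalSpace C), CoreCompact C →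
    ∀ ρ : C → X, Continuous ρ → IsOpen (ρ ⁻¹' V)

/-- The core compactly generated topology `𝒞X`. -/
def ccgTopology (X : Type u) [TopologicalSpace X] : TopologicalSpace X where
  IsOpen := ccgOpen X
  isOpen_univ := by intro C tC _ ρ hρ; simpa using isOpen_univ
  isOpen_inter := by
    intro U V hU hV C tC hc ρ hρ
    exact (hU C tC hc ρ hρ).inter (hV C tC hc ρ hρ)
  isOpen_sUnion := by
    intro S hS C tC hc ρ hρ
    rw [preimage_sUnion]
    exact isOpen_biUnion fun t ht => hS t ht C tC hc ρ hρ

/-- A space is core compactly generated if its topology coincides with the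
core compactly generated topology. -/
def CCGenerated (X : Type u) [t : TopologicalSpace X] : Prop := ccgTopology X = t

/-- A set is saturated if it is the intersection of the open sets containing it. -/
def Saturated (K : Set X) : Prop := K = ⋂₀ {U : Set X | IsOpen U ∧ K ⊆ U}

/-- A T₀ space is well-filtered if every filtered family of nonempty compact saturated sets
whose intersection is contained in an open set has a member contained in that open set. -/
def WellFiltered (X : Type u) [TopologicalSpace X] : Prop :=
  T0Space X ∧ ∀ 𝒦 : Set (Set X), 𝒦.Nonempty →
    (∀ K ∈ 𝒦, K.Nonempty ∧ IsCompact K ∧ Saturated K) →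
    (∀ K₁ ∈ 𝒦, ∀ K₂ ∈ 𝒦, ∃ K₃ ∈ 𝒦, K₃ ⊆ K₁ ∧ K₃ ⊆ K₂) →
    ∀ U : Set X, IsOpen U → ⋂₀ 𝒦 ⊆ U → ∃ K ∈ 𝒦, K ⊆ U

/-- A T₀ space is ω-well-filtered if the well-filteredness condition holds for
countable filtered families of nonempty compact saturated sets. -/
def OmegaWellFiltered (X : Type u) [TopologicalSpace X] : Prop :=
  T0Space X ∧ ∀ K : ℕ → Set X,
    (∀ n, (K n).Nonempty ∧ IsCompact (K n) ∧ Saturated (K n)) →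
    (∀ m n, ∃ k, K k ⊆ K m ∧ K k ⊆ K n) →
    ∀ U : Set X, IsOpen U → (⋂ n, K n) ⊆ U → ∃ n, K n ⊆ U

/-- A space is sober if it is T₀ and every irreducible closed set is the closure of a
(unique) point. -/
def SoberSpace (X : Type u) [TopologicalSpace X] : Prop :=
  T0Space X ∧ ∀ A : Set X, IsIrreducible A → IsClosed A → ∃! x : X, A = closure ({x} : Set X)

/-- A T₀ space is a monotone convergence space if the closure of every directed subset
(in the specialization order) is the closure of a point. -/
def MonotoneConvergenceSpace (X : Type u) [TopologicalSpace X] : Prop :=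
  T0Space X ∧ ∀ D : Set X, DirectedSubset specLE D → ∃ x : X, closure D = closure ({x} : Set X)

/-- The hull-kernel style topology on a family of subsets of `X`, generated by the sets
`U^s = {A | A ∩ U ≠ ∅}` for `U` open in `X`. -/
def hullTop (S : Set X → Prop) : TopologicalSpace {A : Set X // S A} :=
  generateFrom {s : Set {A : Set X // S A} |
    ∃ U : Set X, IsOpen U ∧ s = {A : {A : Set X // S A} | ((A : Set X) ∩ U).Nonempty}}

end TopDefs

/-- `A` is an ω-well-filtered determined set (`WD_ω`-set): for every continuous map into
an ω-well-filtered space, the closure of the image of `A` is the closure of a unique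
point. -/
def WDomega (X : Type u) [TopologicalSpace X] (A : Set X) : Prop :=
  ∀ (Z : Type u) (tZ : TopologicalSpace Z), @OmegaWellFiltered Z tZ →
    ∀ g : X → Z, @Continuous X Z _ tZ g →
      ∃! z : Z, @closure Z tZ (g '' A) = @closure Z tZ ({z} : Set Z)

/-- The standard ω-well-filterification: closed `WD_ω`-sets with the hull-kernel topology. -/
def WFomega (X : Type u) [TopologicalSpace X] := {A : Set X // IsClosed A ∧ WDomega X A}

def wfomegaTop (X : Type u) [TopologicalSpace X] : TopologicalSpace (WFomega X) :=
  hullTop (fun A => IsClosed A ∧ WDomega X A)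


section Stmt9Aux

open Classical in
/-- Any finite space is core compact. -/
lemma coreCompact_of_finite {C : Type u} [tC : TopologicalSpace C] [Finite C] :
    CoreCompact C := by
  intro U hU x hx
  refine ⟨U, hU, hx, ?_⟩
  intro S hS hcov
  classical
  have hch : ∀ y, y ∈ U → ∃ W, W ∈ S ∧ y ∈ W := by
    intro y hy
    obtain ⟨W, hW, hyW⟩ := hcov hy
    exact ⟨W, hW, hyW⟩
  choose! f hf1 hf2 using hch
  refine ⟨(Set.toFinite U).toFinset.image f, ?_, ?_⟩
  · intro W hW
    simp only [Finset.coe_image, Set.mem_image, Set.Finite.coe_toFinset] at hW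
    obtain ⟨y, hyU, rfl⟩ := hW
    exact hf1 y hyU
  · intro y hy
    refine ⟨f y, ?_, hf2 y hy⟩
    simp only [Finset.coe_image, Set.mem_image, Set.Finite.coe_toFinset]
    exact ⟨y, hy, rfl⟩

/-- The Sierpiński topology on `ULift Bool`, with `{true}` open. -/
def sierpTop : TopologicalSpace (ULift.{u} Bool) where
  IsOpen S := ULift.up false ∈ S → ULift.up true ∈ S
  isOpen_univ := fun _ => trivial
  isOpen_inter := fun s t hs ht hm => ⟨hs hm.1, ht hm.2⟩
  isOpen_sUnion := fun S h hm => by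
    obtain ⟨s, hsS, hms⟩ := hm
    exact ⟨s, hsS, h s hsS hms⟩

/-- Core-compactly generated opens are upper sets in the specialization order. -/
lemma ccgOpen_upper {P : Type u} [tP : TopologicalSpace P] {W : Set P} (hW : ccgOpen P W)
    {a b : P} (hab : a ∈ closure ({b} : Set P)) (ha : a ∈ W) : b ∈ W := by
  classical
  have hcont : @Continuous _ _ sierpTop tP (fun c : ULift.{u} Bool => cond c.down b a) := by
    rw [continuous_def]
    intro V hV
    show ULift.up false ∈ _ → ULift.up true ∈ _
    intro h
    have ha' : a ∈ V := h
    obtain ⟨c, hcV, hc⟩ := mem_closure_iff.mp hab V hV ha'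
    have : c = b := hc
    show b ∈ V
    rwa [this] at hcV
  have hop := hW _ sierpTop (@coreCompact_of_finite _ sierpTop _) _ hcont
  have h1 : ULift.up true ∈ (fun c : ULift.{u} Bool => cond c.down b a) ⁻¹' W := hop ha
  exact h1

/-- The convergent-sequence space: `some n → none` with cofinite convergence. -/
def seqTop : TopologicalSpace (ULift.{u} (Option ℕ)) where
  IsOpen S := ULift.up none ∈ S → {n : ℕ | ULift.up (some n) ∉ S}.Finite
  isOpen_univ := fun _ => by
    convert Set.finite_empty using 1
    ext n
    simp
  isOpen_inter := fun s t hs ht hm => by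
    classical
    refine ((hs hm.1).union (ht hm.2)).subset fun n hn => ?_
    by_cases hns : ULift.up (some n) ∈ s
    · exact Or.inr fun hnt => hn ⟨hns, hnt⟩
    · exact Or.inl hns
  isOpen_sUnion := fun S h hm => by
    obtain ⟨s, hsS, hms⟩ := hm
    exact (h s hsS hms).subset fun n hn hns => hn ⟨s, hsS, hns⟩

lemma coreCompact_seq : @CoreCompact (ULift.{u} (Option ℕ)) seqTop := by
  classical
  intro U hU x hx
  rcases x with ⟨_ | k⟩
  · -- x = none
    refine ⟨U, hU, hx, ?_⟩
    intro S hS hcov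
    obtain ⟨W₀, hW₀S, hxW₀⟩ := hcov hx
    have hE : {n : ℕ | ULift.up (some n) ∉ W₀}.Finite := hS W₀ hW₀S hxW₀
    have hch : ∀ n : ℕ, ULift.up (some n) ∈ U → ∃ W, W ∈ S ∧ ULift.up (some n) ∈ W :=
      fun n hn => by obtain ⟨W, hW, h⟩ := hcov hn; exact ⟨W, hW, h⟩
    choose! f hf1 hf2 using hch
    refine ⟨insert W₀ (hE.toFinset.image fun n =>
      if ULift.up (some n) ∈ U then f n else W₀), ?_, ?_⟩
    · intro W hW
      simp only [Finset.coe_insert, Set.mem_insert_iff, Finset.coe_image, Set.mem_image,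
        Set.Finite.coe_toFinset] at hW
      rcases hW with rfl | ⟨n, _, rfl⟩
      · exact hW₀S
      · by_cases hn : ULift.up (some n) ∈ U
        · simpa [hn] using hf1 n hn
        · simpa [hn] using hW₀S
    · intro y hy
      rcases y with ⟨_ | n⟩
      · exact ⟨W₀, by simp, hxW₀⟩
      · by_cases hnW : ULift.up (some n) ∈ W₀
        · exact ⟨W₀, by simp, hnW⟩
        · refine ⟨f n, ?_, hf2 n hy⟩
          simp only [Finset.coe_insert, Set.mem_insert_iff, Finset.coe_image, Set.mem_image,
            Set.Finite.coe_toFinset]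
          exact Or.inr ⟨n, hnW, by simp [hy]⟩
  · -- x = some k
    refine ⟨{ULift.up (some k)}, ?_, rfl, ?_⟩
    · intro h
      simp at h
    · intro S hS hcov
      obtain ⟨W, hWS, hxW⟩ := hcov hx
      refine ⟨{W}, by simpa using hWS, ?_⟩
      intro y hy
      rw [Set.mem_singleton_iff.mp hy]
      simpa using hxW


section Stmt9Aux2

variable {X : Type u} [tX : TopologicalSpace X]

/-- The basic open `U^s` of the hull topology. -/
def hullGen (U : Set X) : Set (WFomega X) := {A | (A.1 ∩ U).Nonempty}

lemma isOpen_hullGen {U : Set X} (hU : IsOpen U) :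
    @IsOpen _ (wfomegaTop X) (hullGen U) :=
  TopologicalSpace.GenerateOpen.basic _ ⟨U, hU, rfl⟩

lemma mem_hullGen {U : Set X} {A : WFomega X} : A ∈ hullGen U ↔ (A.1 ∩ U).Nonempty := Iff.rfl

/-- Opens of the hull topology are upper sets for inclusion. -/
lemma isOpenY_mono {s : Set (WFomega X)} (hs : @IsOpen _ (wfomegaTop X) s)
    {A B : WFomega X} (hAB : A.1 ⊆ B.1) (hA : A ∈ s) : B ∈ s := by
  have hs' : TopologicalSpace.GenerateOpen
      {s : Set (WFomega X) |
        ∃ U : Set X, IsOpen U ∧ s = {A : WFomega X | (A.1 ∩ U).Nonempty}} s := hs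
  clear hs
  induction hs' with
  | basic t ht =>
      obtain ⟨U, hU, rfl⟩ := ht
      exact hA.mono (Set.inter_subset_inter_left _ hAB)
  | univ => trivial
  | inter t₁ t₂ h₁ h₂ ih₁ ih₂ => exact ⟨ih₁ hA.1, ih₂ hA.2⟩
  | sUnion S hS ih =>
      obtain ⟨t, htS, hAt⟩ := hA
      exact ⟨t, htS, ih t htS hAt⟩

lemma mem_closureY_of_subset {A B : WFomega X} (hAB : A.1 ⊆ B.1) :
    A ∈ @closure _ (wfomegaTop X) ({B} : Set (WFomega X)) :=
  (@mem_closure_iff _ (wfomegaTop X) _ _).mpr fun o ho hAo =>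
    ⟨B, isOpenY_mono ho hAB hAo, rfl⟩

/-- If `A` is in the closure of `{B}` for any topology finer than the hull topology,
then `A ⊆ B` as sets. -/
lemma val_subset_of_mem_closure {t' : TopologicalSpace (WFomega X)}
    (hle : ∀ s : Set (WFomega X), @IsOpen _ (wfomegaTop X) s → @IsOpen _ t' s)
    {A B : WFomega X} (h : A ∈ @closure _ t' ({B} : Set (WFomega X))) : A.1 ⊆ B.1 := by
  intro x hxA
  by_contra hxB
  have hop : @IsOpen _ t' (hullGen B.1ᶜ) := hle _ (isOpen_hullGen B.2.1.isOpen_compl)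
  obtain ⟨C, hC1, hC2⟩ := (@mem_closure_iff _ t' _ _).mp h _ hop ⟨x, hxA, hxB⟩
  rw [Set.mem_singleton_iff.mp hC2] at hC1
  obtain ⟨y, hy1, hy2⟩ := hC1
  exact hy2 hy1

/-- Point closures are `WD_ω` sets. -/
lemma wd_pointclosure (x : X) : WDomega X (closure {x}) := by
  intro Z tZ hZ g hg
  haveI := hZ.1
  have hmain : closure (g '' closure {x}) = closure {g x} := by
    apply subset_antisymm
    · refine closure_minimal ?_ isClosed_closure
      have h1 := image_closure_subset_closure_image (f := g) (s := {x}) hg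
      simpa [Set.image_singleton] using h1
    · exact closure_mono (Set.singleton_subset_iff.mpr ⟨x, subset_closure rfl, rfl⟩)
  exact ⟨g x, hmain, fun y hy => (inseparable_iff_closure_eq.mpr (hy.symm.trans hmain)).eq⟩

/-- The reflection map `η : X → X^{ω-w}`. -/
def etaY (x : X) : WFomega X := ⟨closure {x}, isClosed_closure, wd_pointclosure x⟩

lemma etaY_preimage_hullGen {U : Set X} (hU : IsOpen U) :
    (etaY ⁻¹' hullGen U : Set X) = U := by
  ext x
  constructor
  · rintro ⟨y, hyc, hyU⟩
    obtain ⟨z, hzU, hz⟩ := mem_closure_iff.mp hyc U hU hyU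
    rwa [← Set.mem_singleton_iff.mp hz]
  · intro hx
    exact ⟨x, subset_closure rfl, hx⟩

lemma continuous_etaY : @Continuous X (WFomega X) tX (wfomegaTop X) etaY := by
  refine continuous_generateFrom_iff.mpr ?_
  rintro s ⟨U, hU, rfl⟩
  have : (etaY ⁻¹' {A : {A : Set X // IsClosed A ∧ WDomega X A} |
      ((A : Set X) ∩ U).Nonempty}) = U := etaY_preimage_hullGen hU
  have h2 : IsOpen (etaY ⁻¹' hullGen U : Set X) := by rw [etaY_preimage_hullGen hU]; exact hU
  exact h2

/-- Hull-topology opens are core compactly generated opens. -/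
lemma ccgOpen_of_isOpenY {s : Set (WFomega X)} (hs : @IsOpen _ (wfomegaTop X) s) :
    @ccgOpen (WFomega X) (wfomegaTop X) s := by
  intro C tC hc ρ hρ
  exact @Continuous.isOpen_preimage C (WFomega X) tC (wfomegaTop X) ρ hρ s hs

lemma t0_CY : @T0Space (WFomega X) (@ccgTopology (WFomega X) (wfomegaTop X)) := by
  rw [t0Space_iff_inseparable]
  intro A B h
  have hiff : ∀ s : Set (WFomega X),
      @IsOpen _ (@ccgTopology (WFomega X) (wfomegaTop X)) s → (A ∈ s ↔ B ∈ s) := by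
    intro s hs
    exact (@inseparable_iff_forall_isOpen _ (@ccgTopology (WFomega X) (wfomegaTop X)) A B).mp h s hs
  apply Subtype.ext
  apply subset_antisymm
  · intro x hx
    by_contra hxB
    have := (hiff _ (ccgOpen_of_isOpenY (isOpen_hullGen B.2.1.isOpen_compl))).mp ⟨x, hx, hxB⟩
    obtain ⟨y, hy1, hy2⟩ := this
    exact hy2 hy1
  · intro x hx
    by_contra hxA
    have := (hiff _ (ccgOpen_of_isOpenY (isOpen_hullGen A.2.1.isOpen_compl))).mpr ⟨x, hx, hxA⟩
    obtain ⟨y, hy1, hy2⟩ := this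
    exact hy2 hy1


section Stmt9Star

variable {X : Type u} [tX : TopologicalSpace X]

lemma mem_compl_hullGen_iff {A₀ : Set X} {B : WFomega X} :
    B ∈ (hullGen A₀ᶜ)ᶜ ↔ B.1 ⊆ A₀ := by
  constructor
  · intro h x hx
    by_contra hx'
    exact h ⟨x, hx, hx'⟩
  · rintro h ⟨x, hx, hx'⟩
    exact hx' (h hx)

lemma star_chain (K : ℕ → Set (WFomega X))
    (hKne : ∀ n, (K n).Nonempty)
    (hKcomp : ∀ n, @IsCompact _ (@ccgTopology (WFomega X) (wfomegaTop X)) (K n))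
    (hKsat : ∀ n, @Saturated _ (@ccgTopology (WFomega X) (wfomegaTop X)) (K n))
    (hdec : ∀ m n : ℕ, m ≤ n → K n ⊆ K m)
    (W : Set (WFomega X)) (hW : @ccgOpen (WFomega X) (wfomegaTop X) W)
    (hsub : (⋂ n, K n) ⊆ W) : ∃ n, K n ⊆ W := by
  classical
  by_contra hno
  push_neg at hno
  set M : ℕ → Set (WFomega X) := fun n => K n ∩ Wᶜ with hMdef
  have hMne : ∀ n, (M n).Nonempty := by
    intro n
    obtain ⟨B, hBK, hBW⟩ := Set.not_subset.mp (hno n)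
    exact ⟨B, hBK, hBW⟩
  have hWopenC : @IsOpen _ (@ccgTopology (WFomega X) (wfomegaTop X)) W := hW
  have hMcompC : ∀ n, @IsCompact _ (@ccgTopology (WFomega X) (wfomegaTop X)) (M n) :=
    fun n => @IsCompact.inter_right _ (@ccgTopology (WFomega X) (wfomegaTop X)) _ _
      (hKcomp n) (@IsOpen.isClosed_compl _ (@ccgTopology (WFomega X) (wfomegaTop X)) _ hWopenC)
  have hMcompY : ∀ n, @IsCompact _ (wfomegaTop X) (M n) := by
    intro n
    refine @isCompact_of_finite_subcover _ (wfomegaTop X) _ ?_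
    intro ι U hUo hcov
    exact @IsCompact.elim_finite_subcover _ (@ccgTopology (WFomega X) (wfomegaTop X)) _ _
      (hMcompC n) U (fun i => ccgOpen_of_isOpenY (hUo i)) hcov
  have hMdec : ∀ m n : ℕ, m ≤ n → M n ⊆ M m :=
    fun m n h => Set.inter_subset_inter_left _ (hdec m n h)
  -- Zorn's lemma: a minimal closed set containing a member of every `M n`
  set S : Set (Set X) := {F | IsClosed F ∧ ∀ n, ∃ B ∈ M n, (B : WFomega X).1 ⊆ F} with hSdef
  obtain ⟨A₀, hA₀⟩ : ∃ A₀, Minimal (· ∈ S) A₀ := by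
    apply zorn_superset
    intro c hcS hchain
    rcases c.eq_empty_or_nonempty with rfl | hcne
    · refine ⟨Set.univ, ⟨isClosed_univ, fun n => ?_⟩, by simp⟩
      obtain ⟨B, hB⟩ := hMne n
      exact ⟨B, hB, Set.subset_univ _⟩
    · refine ⟨⋂₀ c, ⟨isClosed_sInter fun F hF => (hcS hF).1, ?_⟩,
        fun F hF => Set.sInter_subset_of_mem hF⟩
      intro n
      by_contra hempty
      push_neg at hempty
      have hcov : M n ⊆ ⋃ F : c, hullGen ((F : Set X)ᶜ) := by
        intro B hB
        obtain ⟨x, hxB, hxc⟩ := Set.not_subset.mp (hempty B hB)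
        rw [Set.mem_sInter] at hxc
        push_neg at hxc
        obtain ⟨F, hFc, hxF⟩ := hxc
        exact Set.mem_iUnion.mpr ⟨⟨F, hFc⟩, ⟨x, hxB, hxF⟩⟩
      obtain ⟨t, ht⟩ := @IsCompact.elim_finite_subcover _ (wfomegaTop X) _ _ (hMcompY n)
        (fun F : c => hullGen ((F : Set X)ᶜ))
        (fun F => isOpen_hullGen (hcS F.2).1.isOpen_compl) hcov
      have htne : t.Nonempty := by
        by_contra hte
        rw [Finset.not_nonempty_iff_eq_empty] at hte
        obtain ⟨B, hB⟩ := hMne n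
        have := ht hB
        simp [hte] at this
      obtain ⟨Fm, hFmt, hFmmin⟩ := t.exists_minimal htne
      have hFmleast : ∀ F ∈ t, (Fm : Set X) ⊆ (F : Set X) := by
        intro F hFt
        rcases eq_or_ne (F : Set X) (Fm : Set X) with hEq | hne
        · exact hEq ▸ subset_rfl
        · rcases hchain F.2 Fm.2 hne with h | h
          · exact absurd (Subtype.coe_lt_coe.mp (lt_of_le_of_ne h hne)) (fun hlt => (lt_iff_le_not_ge.mp hlt).2 (hFmmin hFt (le_of_lt hlt)))
          · exact h
      obtain ⟨B, hBM, hBFm⟩ := (hcS Fm.2).2 n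
      have hBcov : B ∈ ⋃ F ∈ t, hullGen ((F : Set X)ᶜ) := ht hBM
      obtain ⟨F, hFt, hBF⟩ := Set.mem_iUnion₂.mp hBcov
      obtain ⟨x, hxB, hxF⟩ := hBF
      exact hxF (hFmleast F hFt (hBFm hxB))
  -- choose witnesses β n ∈ M n with β n ⊆ A₀
  obtain ⟨hA₀S, hA₀min⟩ := hA₀
  obtain ⟨hA₀closed, hA₀M⟩ := hA₀S
  choose β hβM hβA using hA₀M
  -- every infinite tail of the βs is dense in A₀
  have htail : ∀ T : Set ℕ, T.Infinite → closure (⋃ k ∈ T, (β k).1) = A₀ := by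
    intro T hT
    have hsubA : closure (⋃ k ∈ T, (β k).1) ⊆ A₀ :=
      closure_minimal (Set.iUnion₂_subset fun k _ => hβA k) hA₀closed
    have hmem : closure (⋃ k ∈ T, (β k).1) ∈ S := by
      refine ⟨isClosed_closure, fun m => ?_⟩
      obtain ⟨k, hkT, hk⟩ := hT.exists_gt m
      refine ⟨β k, hMdec m k (le_of_lt hk) (hβM k), ?_⟩
      exact (Set.subset_biUnion_of_mem (u := fun k => (β k).1) hkT).trans subset_closure
    exact subset_antisymm hsubA (hA₀min hmem hsubA)
  -- A₀ is a WD_ω set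
  have hA₀wd : WDomega X A₀ := by
    intro Z tZ hZ g hg
    haveI := hZ.1
    have hsel : ∀ B : WFomega X, ∃ z : Z, @closure _ tZ (g '' B.1) = @closure _ tZ {z} :=
      fun B => (B.2.2 Z tZ hZ g hg).exists
    choose zs hzs using hsel
    have hzscont : @Continuous _ _ (wfomegaTop X) tZ zs := by
      rw [continuous_def]
      intro V hV
      have hpre : zs ⁻¹' V = hullGen (g ⁻¹' V) := by
        ext B
        constructor
        · intro hB
          have hzB : zs B ∈ @closure _ tZ (g '' B.1) := by
            rw [hzs B]; exact subset_closure rfl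
          obtain ⟨w, hwV, hw⟩ := (@mem_closure_iff _ tZ _ _).mp hzB V hV hB
          obtain ⟨b, hbB, rfl⟩ := hw
          exact ⟨b, hbB, hwV⟩
        · rintro ⟨b, hbB, hgbV⟩
          have hgb : g b ∈ @closure _ tZ ({zs B} : Set Z) := by
            rw [← hzs B]; exact subset_closure (Set.mem_image_of_mem g hbB)
          obtain ⟨w, hwV, hw⟩ := (@mem_closure_iff _ tZ _ _).mp hgb V hV hgbV
          have hw' : w = zs B := hw
          exact Set.mem_preimage.mpr (hw' ▸ hwV)
      rw [hpre]
      exact isOpen_hullGen (hg.isOpen_preimage V hV)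
    -- restrict to members below A₀
    set M' : ℕ → Set (WFomega X) := fun n => M n ∩ (hullGen A₀ᶜ)ᶜ with hM'def
    have hβM' : ∀ n, β n ∈ M' n :=
      fun n => ⟨hβM n, mem_compl_hullGen_iff.mpr (hβA n)⟩
    have hM'compY : ∀ n, @IsCompact _ (wfomegaTop X) (M' n) :=
      fun n => @IsCompact.inter_right _ (wfomegaTop X) _ _ (hMcompY n)
        (@IsOpen.isClosed_compl _ (wfomegaTop X) _ (isOpen_hullGen hA₀closed.isOpen_compl))
    have hM'dec : ∀ m n : ℕ, m ≤ n → M' n ⊆ M' m :=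
      fun m n h => Set.inter_subset_inter_left _ (hMdec m n h)
    -- saturations of the images in Z
    set QZ : ℕ → Set Z := fun n => ⋂₀ {O : Set Z | @IsOpen _ tZ O ∧ zs '' (M' n) ⊆ O}
      with hQZdef
    have himg : ∀ n, zs '' (M' n) ⊆ QZ n :=
      fun n => Set.subset_sInter fun O hO => hO.2
    have hQZsub : ∀ n (O : Set Z), @IsOpen _ tZ O → zs '' (M' n) ⊆ O → QZ n ⊆ O :=
      fun n O hO h2 => Set.sInter_subset_of_mem ⟨hO, h2⟩
    have hQZne : ∀ n, (QZ n).Nonempty :=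
      fun n => ⟨zs (β n), himg n ⟨β n, hβM' n, rfl⟩⟩
    have himgcomp : ∀ n, @IsCompact _ tZ (zs '' (M' n)) :=
      fun n => @IsCompact.image _ _ (wfomegaTop X) tZ _ _ (hM'compY n) hzscont
    have hQZcomp : ∀ n, @IsCompact _ tZ (QZ n) := by
      intro n
      refine @isCompact_of_finite_subcover _ tZ _ ?_
      intro ι U hUo hcov
      obtain ⟨t, ht⟩ := @IsCompact.elim_finite_subcover _ tZ _ _ (himgcomp n) U hUo
        ((himg n).trans hcov)
      exact ⟨t, hQZsub n _ (@isOpen_biUnion _ _ tZ _ _ fun i _ => hUo i) ht⟩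
    have hQZsat : ∀ n, @Saturated _ tZ (QZ n) := by
      intro n
      apply subset_antisymm
      · exact Set.subset_sInter fun O hO => hO.2
      · intro x hx
        refine Set.mem_sInter.mpr fun O hO => ?_
        exact Set.mem_sInter.mp hx O ⟨hO.1, hQZsub n O hO.1 hO.2⟩
    have hQZdec : ∀ m n : ℕ, m ≤ n → QZ n ⊆ QZ m := by
      intro m n h
      apply Set.sInter_subset_sInter
      intro O hO
      exact ⟨hO.1, (Set.image_mono (f := zs) (hM'dec m n h)).trans hO.2⟩
    -- obtain a point of ⋂ QZ inside the closure of g '' A₀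
    have hx : ¬ (⋂ n, QZ n) ⊆ (@closure _ tZ (g '' A₀))ᶜ := by
      intro hcon
      obtain ⟨n, hn⟩ := hZ.2 QZ (fun n => ⟨hQZne n, hQZcomp n, hQZsat n⟩)
        (fun m n => ⟨max m n, hQZdec m (max m n) (le_max_left _ _),
          hQZdec n (max m n) (le_max_right _ _)⟩) _
        (isClosed_closure (s := g '' A₀)).isOpen_compl hcon
      have h1 : zs (β n) ∈ (@closure _ tZ (g '' A₀))ᶜ := hn (himg n ⟨β n, hβM' n, rfl⟩)
      apply h1
      have h2 : zs (β n) ∈ @closure _ tZ (g '' (β n).1) := by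
        rw [hzs (β n)]; exact subset_closure rfl
      exact closure_mono (Set.image_mono (f := g) (hβA n)) h2
    obtain ⟨z, hz1, hz2⟩ : ∃ z, z ∈ (⋂ n, QZ n) ∧ z ∈ @closure _ tZ (g '' A₀) := by
      obtain ⟨z, h1, h2⟩ := Set.not_subset.mp hx
      exact ⟨z, h1, not_not.mp h2⟩
    -- every M' n has a member sent into ↓z
    have hBz : ∀ n, ∃ B ∈ M' n, zs B ∈ @closure _ tZ ({z} : Set Z) := by
      intro n
      by_contra hcon
      push_neg at hcon
      have hOsub : zs '' (M' n) ⊆ (@closure _ tZ ({z} : Set Z))ᶜ := by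
        rintro _ ⟨B, hB, rfl⟩
        exact hcon B hB
      have hz_n : z ∈ QZ n := Set.mem_iInter.mp hz1 n
      have hzmem : z ∈ (@closure _ tZ ({z} : Set Z))ᶜ :=
        hQZsub n _ (isClosed_closure (s := ({z} : Set Z))).isOpen_compl hOsub hz_n
      exact hzmem (subset_closure rfl)
    -- minimality: A₀ is contained in g ⁻¹' ↓z
    have hB₀S : (A₀ ∩ g ⁻¹' (@closure _ tZ ({z} : Set Z))) ∈ S := by
      refine ⟨hA₀closed.inter (IsClosed.preimage hg (isClosed_closure (s := ({z} : Set Z)))), ?_⟩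
      intro n
      obtain ⟨B, hBM'n, hBz'⟩ := hBz n
      refine ⟨B, hBM'n.1, Set.subset_inter (mem_compl_hullGen_iff.mp hBM'n.2) ?_⟩
      intro b hbB
      have h1 : g b ∈ @closure _ tZ ({zs B} : Set Z) := by
        rw [← hzs B]; exact subset_closure (Set.mem_image_of_mem g hbB)
      have h2 : @closure _ tZ ({zs B} : Set Z) ⊆ @closure _ tZ ({z} : Set Z) :=
        closure_minimal (Set.singleton_subset_iff.mpr hBz')
          (isClosed_closure (s := ({z} : Set Z)))
      exact h2 h1
    have hB₀eq : A₀ ∩ g ⁻¹' (@closure _ tZ ({z} : Set Z)) = A₀ :=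
      subset_antisymm Set.inter_subset_left (hA₀min hB₀S Set.inter_subset_left)
    have hgA₀ : g '' A₀ ⊆ @closure _ tZ ({z} : Set Z) := by
      rintro _ ⟨a, haA, rfl⟩
      have : a ∈ A₀ ∩ g ⁻¹' (@closure _ tZ ({z} : Set Z)) := hB₀eq.symm ▸ haA
      exact this.2
    have hmain : @closure _ tZ (g '' A₀) = @closure _ tZ ({z} : Set Z) :=
      subset_antisymm
        (closure_minimal hgA₀ (isClosed_closure (s := ({z} : Set Z))))
        (closure_minimal (Set.singleton_subset_iff.mpr hz2)
          (isClosed_closure (s := (g '' A₀))))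
    exact ⟨z, hmain, fun y hy =>
      (inseparable_iff_closure_eq.mpr (hy.symm.trans hmain)).eq⟩
  -- package A₀ as a point of the ω-well-filterification
  set Apoint : WFomega X := ⟨A₀, hA₀closed, hA₀wd⟩ with hApdef
  have hApK : ∀ n, Apoint ∈ K n := by
    intro n
    rw [hKsat n]
    refine Set.mem_sInter.mpr fun O hO => ?_
    have hβO : β n ∈ O := hO.2 (hβM n).1
    exact @ccgOpen_upper (WFomega X) (wfomegaTop X) O hO.1 _ _
      (mem_closureY_of_subset (hβA n)) hβO
  have hApW : Apoint ∈ W := hsub (Set.mem_iInter.mpr hApK)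
  -- the β k converge to Apoint in the hull topology
  have hconv : ∀ U' : Set X, IsOpen U' → (A₀ ∩ U').Nonempty →
      {k : ℕ | ¬((β k).1 ∩ U').Nonempty}.Finite := by
    intro U' hU' hne
    by_contra hfin
    have hT : {k : ℕ | ¬((β k).1 ∩ U').Nonempty}.Infinite := hfin
    have heq := htail _ hT
    obtain ⟨x, hxA, hxU⟩ := hne
    rw [← heq] at hxA
    obtain ⟨y, hyU', hymem⟩ := mem_closure_iff.mp hxA U' hU' hxU
    obtain ⟨k, hkT, hyk⟩ := Set.mem_iUnion₂.mp hymem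
    exact hkT ⟨y, hyk, hyU'⟩
  -- the convergent-sequence probe
  have hρcont : @Continuous _ _ seqTop (wfomegaTop X)
      (fun c : ULift.{u} (Option ℕ) => Option.casesOn c.down Apoint β) := by
    refine (@continuous_generateFrom_iff _ _ _ seqTop _).mpr ?_
    rintro s ⟨U', hU', rfl⟩
    intro hnone
    have hne : (A₀ ∩ U').Nonempty := hnone
    refine (hconv U' hU' hne).subset ?_
    intro k hk
    exact hk
  have hρW := hW _ seqTop coreCompact_seq _ hρcont
  have hfin : {n : ℕ | ULift.up (some n) ∉
      (fun c : ULift.{u} (Option ℕ) => Option.casesOn c.down Apoint β) ⁻¹' W}.Finite :=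
    hρW hApW
  obtain ⟨k, hk⟩ := hfin.infinite_compl.nonempty
  exact (hβM k).2 (not_not.mp hk)


section Stmt9Final

variable {X : Type u} [tX : TopologicalSpace X]

/-- The ccg topology on the ω-well-filterification is ω-well-filtered. -/
lemma starOmegaWF : @OmegaWellFiltered (WFomega X) (@ccgTopology (WFomega X) (wfomegaTop X)) := by
  refine ⟨t0_CY, ?_⟩
  intro K hK hfilt W hWopen hsub
  choose f hf1 hf2 using hfilt
  set r : ℕ → ℕ := fun k => Nat.rec 0 (fun k rk => f rk (k + 1)) k with hrdef
  have hrS : ∀ k, K (r (k + 1)) ⊆ K (r k) ∧ K (r (k + 1)) ⊆ K (k + 1) :=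
    fun k => ⟨hf1 _ _, hf2 _ _⟩
  have hdec : ∀ m n, m ≤ n → K (r n) ⊆ K (r m) := by
    intro m n h
    induction n, h using Nat.le_induction with
    | base => exact subset_rfl
    | succ n hmn ih => exact (hrS n).1.trans ih
  have hsub' : (⋂ k, K (r k)) ⊆ W := by
    intro x hx
    apply hsub
    refine Set.mem_iInter.mpr fun n => ?_
    cases n with
    | zero => exact Set.mem_iInter.mp hx 0
    | succ n => exact (hrS n).2 (Set.mem_iInter.mp hx (n + 1))
  obtain ⟨k, hk⟩ := star_chain (fun k => K (r k)) (fun k => (hK (r k)).1)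
    (fun k => (hK (r k)).2.1) (fun k => (hK (r k)).2.2) hdec W hWopen hsub'
  exact ⟨r k, hk⟩

end Stmt9Final

/-- the standard ω-well-filterification of a core compactly generated space
is again core compactly generated. -/
theorem stmt9 {X : Type u} [TopologicalSpace X] [T0Space X] (h : CCGenerated X) :
    @CCGenerated (WFomega X) (wfomegaTop X) := by
  show @ccgTopology (WFomega X) (wfomegaTop X) = wfomegaTop X
  refine TopologicalSpace.ext_iff.mpr fun s => ?_
  constructor
  · -- a ccg-open set is open in the hull topology
    intro hW
    have hWc : @ccgOpen (WFomega X) (wfomegaTop X) s := hW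
    -- η ⁻¹ s is ccg-open in X, hence open since X is CCG
    have hUc : ccgOpen X (etaY ⁻¹' s) := by
      intro C tC hc ρ hρ
      have hcomp : @Continuous C (WFomega X) tC (wfomegaTop X) (etaY ∘ ρ) :=
        @Continuous.comp C X (WFomega X) tC _ (wfomegaTop X) ρ etaY continuous_etaY hρ
      exact hWc C tC hc _ hcomp
    have hU : IsOpen (etaY ⁻¹' s) := by
      have h' : @IsOpen X (ccgTopology X) (etaY ⁻¹' s) := hUc
      rwa [h] at h'
    -- η is continuous into the ccg topology on WFomega X
    have hetaC : @Continuous X (WFomega X) _ (@ccgTopology (WFomega X) (wfomegaTop X)) etaY := by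
      rw [continuous_def]
      intro V hV
      have hVc : ccgOpen X (etaY ⁻¹' V) := by
        intro C tC hc ρ hρ
        have hcomp : @Continuous C (WFomega X) tC (wfomegaTop X) (etaY ∘ ρ) :=
          @Continuous.comp C X (WFomega X) tC _ (wfomegaTop X) ρ etaY continuous_etaY hρ
        exact hV C tC hc _ hcomp
      have h' : @IsOpen X (ccgTopology X) (etaY ⁻¹' V) := hVc
      rwa [h] at h'
    have hle : ∀ t : Set (WFomega X), @IsOpen _ (wfomegaTop X) t →
        @IsOpen _ (@ccgTopology (WFomega X) (wfomegaTop X)) t :=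
      fun t ht => ccgOpen_of_isOpenY ht
    have hseq : s = hullGen (etaY ⁻¹' s) := by
      apply Set.eq_of_subset_of_subset
      · -- the crux: A ∈ s implies A meets η ⁻¹ s
        intro A hA
        by_contra hAU
        have hAU' : ∀ a ∈ A.1, etaY a ∉ s := fun a ha hax => hAU ⟨a, ha, hax⟩
        obtain ⟨z, hz, -⟩ := A.2.2 (WFomega X) (@ccgTopology (WFomega X) (wfomegaTop X))
          starOmegaWF etaY hetaC
        -- z = A
        have hα : A.1 ⊆ z.1 := by
          intro a ha
          have h1 : etaY a ∈ @closure _ (@ccgTopology (WFomega X) (wfomegaTop X)) (etaY '' A.1) :=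
            @subset_closure (WFomega X) (@ccgTopology (WFomega X) (wfomegaTop X)) (etaY '' A.1)
              _ (Set.mem_image_of_mem _ ha)
          rw [hz] at h1
          have h2 : (etaY a).1 ⊆ z.1 := val_subset_of_mem_closure hle h1
          exact h2 (subset_closure rfl)
        have hzc : z ∈ @closure _ (@ccgTopology (WFomega X) (wfomegaTop X)) (etaY '' A.1) := by
          rw [hz]
          exact @subset_closure (WFomega X) (@ccgTopology (WFomega X) (wfomegaTop X)) {z} z rfl
        have hβ : z.1 ⊆ A.1 := by
          intro x hx
          by_contra hxA
          have hV : @IsOpen _ (@ccgTopology (WFomega X) (wfomegaTop X)) (hullGen A.1ᶜ) :=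
            hle _ (isOpen_hullGen A.2.1.isOpen_compl)
          obtain ⟨w, hwV, hw⟩ :=
            (@mem_closure_iff _ (@ccgTopology (WFomega X) (wfomegaTop X)) _ _).mp hzc _ hV
              ⟨x, hx, hxA⟩
          obtain ⟨a, haA, rfl⟩ := hw
          obtain ⟨y, hy1, hy2⟩ := hwV
          exact hy2 (closure_minimal (Set.singleton_subset_iff.mpr haA) A.2.1 hy1)
        have hzA : z = A := Subtype.ext (subset_antisymm hβ hα)
        rw [hzA] at hzc
        obtain ⟨w, hws, hw⟩ :=
          (@mem_closure_iff _ (@ccgTopology (WFomega X) (wfomegaTop X)) _ _).mp hzc _ hW hA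
        obtain ⟨a, haA, rfl⟩ := hw
        exact hAU' a haA hws
      · -- upward closure
        rintro B ⟨a, haB, hax⟩
        exact @ccgOpen_upper (WFomega X) (wfomegaTop X) s hWc _ _
          (mem_closureY_of_subset (closure_minimal (Set.singleton_subset_iff.mpr haB) B.2.1)) hax
    rw [hseq]
    exact isOpen_hullGen hU
  · intro hs
    exact ccgOpen_of_isOpenY hs
end Stmt9Star
end Stmt9Aux2
end Stmt9Aux
end

section
/- Let X be a core compactly generated space. Then the standard D-completion X^d of X is again core compactly generated. -/
open Set TopologicalSpace

universe u

/-- `A` is tapered: for every continuous map into a monotone convergence space, the image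
of `A` has a supremum in the specialization order. -/
def Tapered (X : Type u) [TopologicalSpace X] (A : Set X) : Prop :=
  ∀ (Y : Type u) (tY : TopologicalSpace Y), @MonotoneConvergenceSpace Y tY →
    ∀ f : X → Y, @Continuous X Y _ tY f →
      ∃ s : Y, IsSupWrt (@specLE Y tY) (f '' A) s

/-- The standard D-completion: closed tapered sets with the hull-kernel topology. -/
def Dcompletion (X : Type u) [TopologicalSpace X] := {A : Set X // IsClosed A ∧ Tapered X A}

def dTop (X : Type u) [TopologicalSpace X] : TopologicalSpace (Dcompletion X) :=
  hullTop (fun A => IsClosed A ∧ Tapered X A)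

/-! ### Auxiliary machinery for statement 11 -/

namespace S11

open TopologicalSpace

section General

variable {α : Type u}

theorem specLE_refl [TopologicalSpace α] (x : α) : specLE x x := subset_closure rfl

theorem specLE_trans [TopologicalSpace α] {x y z : α} (h1 : specLE x y) (h2 : specLE y z) :
    specLE x z := by
  have hsub : closure ({y} : Set α) ⊆ closure {z} :=
    closure_minimal (Set.singleton_subset_iff.mpr h2) isClosed_closure
  exact hsub h1

/-- Open sets are upper sets with respect to the specialization preorder. -/
theorem mem_open_of_specLE [TopologicalSpace α] {O : Set α} (hO : IsOpen O) {x y : α}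
    (h : specLE x y) (hx : x ∈ O) : y ∈ O := by
  obtain ⟨z, hzO, hzy⟩ := mem_closure_iff.mp h O hO hx
  rw [Set.mem_singleton_iff] at hzy
  rwa [hzy] at hzO

/-- A point all of whose subbasic neighbourhoods meet a directed set lies in its closure. -/
theorem gen_closure_mem (𝒮 : Set (Set α)) (D : Set α)
    (hD : DirectedSubset (@specLE α (generateFrom 𝒮)) D) (t : α)
    (h : ∀ s ∈ 𝒮, t ∈ s → ∃ d ∈ D, d ∈ s) :
    t ∈ @closure α (generateFrom 𝒮) D := by
  letI := generateFrom 𝒮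
  rw [mem_closure_iff]
  intro O hO htO
  have key : ∀ O : Set α, TopologicalSpace.GenerateOpen 𝒮 O → t ∈ O → ∃ d ∈ D, d ∈ O := by
    intro O hO
    induction hO with
    | basic s hs => exact fun ht => h s hs ht
    | univ => exact fun _ => ⟨hD.1.choose, hD.1.choose_spec, trivial⟩
    | inter s1 s2 h1 h2 ih1 ih2 =>
        intro ht
        obtain ⟨d1, hd1, hd1s⟩ := ih1 ht.1
        obtain ⟨d2, hd2, hd2s⟩ := ih2 ht.2
        obtain ⟨c, hc, hdc1, hdc2⟩ := hD.2 d1 hd1 d2 hd2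
        exact ⟨c, hc, mem_open_of_specLE (show IsOpen s1 from h1) hdc1 hd1s,
          mem_open_of_specLE (show IsOpen s2 from h2) hdc2 hd2s⟩
    | sUnion S hS ih =>
        rintro ⟨s, hsS, hts⟩
        obtain ⟨d, hd, hds⟩ := ih s hsS hts
        exact ⟨d, hd, s, hsS, hds⟩
  obtain ⟨d, hd, hdO⟩ := key O hO htO
  exact ⟨d, hdO, hd⟩

theorem specLE_generateFrom_iff (𝒮 : Set (Set α)) (a b : α) :
    @specLE α (generateFrom 𝒮) a b ↔ ∀ s ∈ 𝒮, a ∈ s → b ∈ s := by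
  letI := generateFrom 𝒮
  constructor
  · intro h s hs has
    exact mem_open_of_specLE (show IsOpen s from .basic s hs) h has
  · intro h
    refine gen_closure_mem 𝒮 {b} ⟨⟨b, rfl⟩, ?_⟩ a (fun s hs has => ⟨b, rfl, h s hs has⟩)
    rintro x hx y hy
    refine ⟨b, rfl, ?_, ?_⟩
    · rw [show x = b from hx]; exact specLE_refl b
    · rw [show y = b from hy]; exact specLE_refl b

theorem clx_inter_open [TopologicalSpace α] {U : Set α} (hU : IsOpen U) (x : α) :
    (closure ({x} : Set α) ∩ U).Nonempty ↔ x ∈ U := by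
  constructor
  · rintro ⟨y, hy1, hy2⟩
    exact mem_open_of_specLE hU hy1 hy2
  · intro hx
    exact ⟨x, subset_closure rfl, hx⟩

end General

section TaperedLemmas

variable {X : Type u} [TopologicalSpace X]

theorem tapered_closure_singleton (x : X) : Tapered X (closure {x}) := by
  intro Y tY hY f hf
  letI := tY
  refine ⟨f x, ?_, ?_⟩
  · rintro y ⟨x', hx', rfl⟩
    have hsub : closure ({x} : Set X) ⊆ f ⁻¹' closure {f x} :=
      closure_minimal (Set.singleton_subset_iff.mpr (subset_closure rfl))
        (IsClosed.preimage hf isClosed_closure)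
    exact hsub hx'
  · intro u hu
    exact hu (f x) ⟨x, subset_closure rfl, rfl⟩

theorem tapered_nonempty {A : Set X} (hA : Tapered X A) : A.Nonempty := by
  rw [Set.nonempty_iff_ne_empty]
  intro hemp
  subst hemp
  letI tB : TopologicalSpace (ULift.{u} Bool) := ⊥
  haveI : DiscreteTopology (ULift.{u} Bool) := ⟨rfl⟩
  have hspec : ∀ u v : ULift.{u} Bool, specLE u v → u = v := by
    intro u v huv
    have hcl : closure ({v} : Set (ULift.{u} Bool)) = {v} := (isClosed_discrete _).closure_eq
    rw [specLE, hcl] at huv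
    exact huv
  have hmc : @MonotoneConvergenceSpace (ULift.{u} Bool) tB := by
    refine ⟨inferInstance, ?_⟩
    intro D hD
    obtain ⟨a, ha⟩ := hD.1
    refine ⟨a, ?_⟩
    have hDa : D = {a} := by
      apply Set.eq_singleton_iff_unique_mem.mpr
      refine ⟨ha, fun b hb => ?_⟩
      obtain ⟨c, hc, hbc, hac⟩ := hD.2 b hb a ha
      rw [hspec b c hbc, hspec a c hac]
    rw [hDa]
  obtain ⟨s, hs⟩ := hA (ULift.{u} Bool) tB hmc (fun _ => ULift.up true) continuous_const
  have hub : ∀ t : ULift.{u} Bool, IsUBWrt specLE ((fun _ => ULift.up true) '' (∅ : Set X)) t := by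
    rintro t d ⟨x, hx, rfl⟩
    exact hx.elim
  have e1 : s = ULift.up true := hspec _ _ (hs.2 _ (hub (ULift.up true)))
  have e2 : s = ULift.up false := hspec _ _ (hs.2 _ (hub (ULift.up false)))
  have : ULift.up.{u} true = ULift.up false := e1.symm.trans e2
  simp at this

theorem tapered_dirUnion (𝒟 : Set (Dcompletion X)) (hne : 𝒟.Nonempty)
    (hdir : ∀ B₁ ∈ 𝒟, ∀ B₂ ∈ 𝒟, ∃ B₃ ∈ 𝒟, B₁.1 ⊆ B₃.1 ∧ B₂.1 ⊆ B₃.1) :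
    Tapered X (closure (⋃ B ∈ 𝒟, B.1)) := by
  intro Y tY hY g hg
  letI := tY
  set E : Set Y := {z | ∃ B ∈ 𝒟, IsSupWrt specLE (g '' B.1) z} with hE
  have hEne : E.Nonempty := by
    obtain ⟨B, hB⟩ := hne
    obtain ⟨z, hz⟩ := B.2.2 Y tY hY g hg
    exact ⟨z, B, hB, hz⟩
  have hEdir : DirectedSubset specLE E := by
    refine ⟨hEne, ?_⟩
    rintro z1 ⟨B1, hB1, hz1⟩ z2 ⟨B2, hB2, hz2⟩
    obtain ⟨B3, hB3, h13, h23⟩ := hdir B1 hB1 B2 hB2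
    obtain ⟨z3, hz3⟩ := B3.2.2 Y tY hY g hg
    refine ⟨z3, ⟨B3, hB3, hz3⟩, ?_, ?_⟩
    · exact hz1.2 z3 (by rintro y ⟨x, hx, rfl⟩; exact hz3.1 (g x) ⟨x, h13 hx, rfl⟩)
    · exact hz2.2 z3 (by rintro y ⟨x, hx, rfl⟩; exact hz3.1 (g x) ⟨x, h23 hx, rfl⟩)
  obtain ⟨t, ht⟩ := hY.2 E hEdir
  have htE : t ∈ closure E := by rw [ht]; exact subset_closure rfl
  have htsupE : IsSupWrt specLE E t := by
    constructor
    · intro z hz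
      have : z ∈ closure ({t} : Set Y) := by rw [← ht]; exact subset_closure hz
      exact this
    · intro u hu
      exact closure_minimal (fun z hz => hu z hz) isClosed_closure htE
  refine ⟨t, ?_, ?_⟩
  · rintro y ⟨x, hx, rfl⟩
    have hsub : closure (⋃ B ∈ 𝒟, B.1) ⊆ g ⁻¹' closure {t} := by
      apply closure_minimal _ (IsClosed.preimage hg isClosed_closure)
      intro x' hx'
      simp only [Set.mem_iUnion] at hx'
      obtain ⟨B, hB, hx'B⟩ := hx'
      obtain ⟨z, hz⟩ := B.2.2 Y tY hY g hg
      exact specLE_trans (hz.1 (g x') ⟨x', hx'B, rfl⟩) (htsupE.1 z ⟨B, hB, hz⟩)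
    exact hsub hx
  · intro u hu
    apply htsupE.2
    rintro z ⟨B, hB, hz⟩
    apply hz.2
    rintro y ⟨x, hx, rfl⟩
    exact hu (g x) ⟨x, subset_closure (Set.mem_biUnion hB hx), rfl⟩

end TaperedLemmas

section DcompletionBasics

variable {X : Type u} [TopologicalSpace X]

/-- The subbasis generating the topology of the D-completion. -/
def dGen (X : Type u) [TopologicalSpace X] : Set (Set (Dcompletion X)) :=
  {s | ∃ U : Set X, IsOpen U ∧ s = {A : Dcompletion X | (A.1 ∩ U).Nonempty}}

theorem dTop_eq (X : Type u) [TopologicalSpace X] :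
    dTop X = generateFrom (dGen X) := rfl

/-- The canonical map into the D-completion. -/
def etaD (x : X) : Dcompletion X :=
  ⟨closure {x}, isClosed_closure, tapered_closure_singleton x⟩

theorem etaD_continuous : @Continuous X (Dcompletion X) _ (dTop X) etaD := by
  rw [dTop_eq]
  apply continuous_generateFrom_iff.mpr
  rintro s ⟨U, hU, rfl⟩
  have hpre : etaD ⁻¹' {A : Dcompletion X | (A.1 ∩ U).Nonempty} = U := by
    ext x
    exact clx_inter_open hU x
  rw [hpre]
  exact hU

theorem dspec_iff (A B : Dcompletion X) :
    @specLE (Dcompletion X) (dTop X) A B ↔ A.1 ⊆ B.1 := by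
  rw [dTop_eq, specLE_generateFrom_iff]
  constructor
  · intro h
    by_contra hns
    obtain ⟨x, hxA, hxB⟩ := Set.not_subset.mp hns
    have hmem := h {A' : Dcompletion X | (A'.1 ∩ B.1ᶜ).Nonempty} ⟨B.1ᶜ, B.2.1.isOpen_compl, rfl⟩
      ⟨x, hxA, hxB⟩
    obtain ⟨y, hy1, hy2⟩ := hmem
    exact hy2 hy1
  · rintro hsub s ⟨U, hU, rfl⟩ hAs
    exact hAs.mono (Set.inter_subset_inter_left _ hsub)

end DcompletionBasics

end S11

namespace S11

open TopologicalSpace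

section Probes

variable {X : Type u} [TopologicalSpace X]

/-- Any topology on a two-point type is core compact. -/
theorem coreCompact_bool (tS : TopologicalSpace (ULift.{u} Bool)) :
    @CoreCompact (ULift.{u} Bool) tS := by
  letI := tS
  intro W hW x hx
  refine ⟨W, hW, hx, ?_⟩
  intro S hS hcov
  classical
  by_cases ht : ULift.up true ∈ W
  · obtain ⟨Wt, hWtS, hWt⟩ := hcov ht
    by_cases hf : ULift.up false ∈ W
    · obtain ⟨Wf, hWfS, hWf⟩ := hcov hf
      refine ⟨{Wt, Wf}, ?_, ?_⟩
      · intro s hs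
        simp only [Finset.coe_insert, Finset.coe_singleton, Set.mem_insert_iff,
          Set.mem_singleton_iff] at hs
        rcases hs with rfl | rfl <;> assumption
      · rintro ⟨b⟩ hy
        cases b
        · exact ⟨Wf, by simp, hWf⟩
        · exact ⟨Wt, by simp, hWt⟩
    · refine ⟨{Wt}, ?_, ?_⟩
      · intro s hs
        simp only [Finset.coe_singleton, Set.mem_singleton_iff] at hs
        rcases hs with rfl; assumption
      · rintro ⟨b⟩ hy
        cases b
        · exact absurd hy hf
        · exact ⟨Wt, by simp, hWt⟩
  · by_cases hf : ULift.up false ∈ W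
    · obtain ⟨Wf, hWfS, hWf⟩ := hcov hf
      refine ⟨{Wf}, ?_, ?_⟩
      · intro s hs
        simp only [Finset.coe_singleton, Set.mem_singleton_iff] at hs
        rcases hs with rfl; assumption
      · rintro ⟨b⟩ hy
        cases b
        · exact ⟨Wf, by simp, hWf⟩
        · exact absurd hy ht
    · refine ⟨∅, by simp, ?_⟩
      rintro ⟨b⟩ hy
      cases b
      · exact absurd hy hf
      · exact absurd hy ht

/-- Sets open in the core compactly generated topology of the D-completion are upper sets
with respect to inclusion. -/
theorem ccgOpen_upper {V : Set (Dcompletion X)}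
    (hV : @ccgOpen (Dcompletion X) (dTop X) V) {A B : Dcompletion X}
    (hA : A ∈ V) (hAB : A.1 ⊆ B.1) : B ∈ V := by
  classical
  letI tS : TopologicalSpace (ULift.{u} Bool) := generateFrom {{ULift.up true}}
  set ρ : ULift.{u} Bool → Dcompletion X := fun b => if b.down then B else A with hρdef
  have hρ : @Continuous (ULift.{u} Bool) (Dcompletion X) tS (dTop X) ρ := by
    rw [dTop_eq]
    apply continuous_generateFrom_iff.mpr
    rintro s ⟨U, hU, rfl⟩
    by_cases hfa : (A.1 ∩ U).Nonempty
    · have hfb : (B.1 ∩ U).Nonempty := hfa.mono (Set.inter_subset_inter_left _ hAB)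
      have : ρ ⁻¹' {A' : Dcompletion X | (A'.1 ∩ U).Nonempty} = Set.univ := by
        ext ⟨b⟩
        cases b <;> simp [hρdef, hfa, hfb]
      rw [this]; exact isOpen_univ
    · by_cases hfb : (B.1 ∩ U).Nonempty
      · have : ρ ⁻¹' {A' : Dcompletion X | (A'.1 ∩ U).Nonempty} = {ULift.up true} := by
          ext ⟨b⟩
          cases b <;> simp [hρdef, hfa, hfb]
        rw [this]
        exact .basic _ rfl
      · have : ρ ⁻¹' {A' : Dcompletion X | (A'.1 ∩ U).Nonempty} = ∅ := by
          ext ⟨b⟩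
          cases b <;> simp [hρdef, hfa, hfb]
        rw [this]; exact isOpen_empty
  have hopen := hV (ULift.{u} Bool) tS (coreCompact_bool tS) ρ hρ
  have hfalse : ULift.up false ∈ ρ ⁻¹' V := by
    show ρ (ULift.up false) ∈ V
    simpa [hρdef] using hA
  have key : ∀ O : Set (ULift.{u} Bool), TopologicalSpace.GenerateOpen {{ULift.up true}} O →
      ULift.up false ∈ O → ULift.up true ∈ O := by
    intro O hO
    induction hO with
    | basic s hs =>
        intro hmem
        rw [Set.mem_singleton_iff] at hs
        subst hs
        rw [Set.mem_singleton_iff] at hmem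
        have : (false : Bool) = true := congrArg ULift.down hmem
        simp at this
    | univ => exact fun _ => trivial
    | inter s t hs ht ihs iht => exact fun h => ⟨ihs h.1, iht h.2⟩
    | sUnion S hS ih =>
        rintro ⟨s, hsS, hys⟩
        exact ⟨s, hsS, ih s hsS hys⟩
  have htrue := key _ hopen hfalse
  simpa [hρdef] using htrue

/-- Lemma A: ccg-open subsets of the D-completion are inaccessible for suprema of
directed families. -/
theorem lemA {V : Set (Dcompletion X)}
    (hV : @ccgOpen (Dcompletion X) (dTop X) V)
    (𝒟 : Set (Dcompletion X)) (hne : 𝒟.Nonempty)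
    (hdir : ∀ B₁ ∈ 𝒟, ∀ B₂ ∈ 𝒟, ∃ B₃ ∈ 𝒟, B₁.1 ⊆ B₃.1 ∧ B₂.1 ⊆ B₃.1)
    (S : Dcompletion X) (hS : S.1 = closure (⋃ B ∈ 𝒟, B.1))
    (hSV : S ∈ V) : ∃ B ∈ 𝒟, B ∈ V := by
  classical
  letI tC : TopologicalSpace (Option {B : Dcompletion X // B ∈ 𝒟}) :=
    { IsOpen := fun W => W = ∅ ∨ (none ∈ W ∧
        (∀ b₁ : {B : Dcompletion X // B ∈ 𝒟}, some b₁ ∈ W →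
          ∀ b₂ : {B : Dcompletion X // B ∈ 𝒟}, b₁.1.1 ⊆ b₂.1.1 → some b₂ ∈ W) ∧
        ∃ b, some b ∈ W)
      isOpen_univ := Or.inr ⟨trivial, fun _ _ _ _ => trivial,
        ⟨⟨hne.choose, hne.choose_spec⟩, trivial⟩⟩
      isOpen_inter := by
        rintro s t (rfl | ⟨hs1, hs2, b1, hb1⟩) ht
        · exact Or.inl (by simp)
        rcases ht with rfl | ⟨ht1, ht2, b2, hb2⟩
        · exact Or.inl (by simp)
        refine Or.inr ⟨⟨hs1, ht1⟩,
          fun c1 hc1 c2 hc12 => ⟨hs2 c1 hc1.1 c2 hc12, ht2 c1 hc1.2 c2 hc12⟩, ?_⟩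
        obtain ⟨B3, hB3, h13, h23⟩ := hdir b1.1 b1.2 b2.1 b2.2
        exact ⟨⟨B3, hB3⟩, hs2 b1 hb1 ⟨B3, hB3⟩ h13, ht2 b2 hb2 ⟨B3, hB3⟩ h23⟩
      isOpen_sUnion := by
        intro S' hS'
        by_cases hall : ∀ s ∈ S', s = ∅
        · refine Or.inl (Set.eq_empty_iff_forall_notMem.mpr ?_)
          rintro y ⟨s, hs, hy⟩
          rw [hall s hs] at hy
          exact hy
        · push_neg at hall
          obtain ⟨s0, hs0S, hs0ne⟩ := hall
          rcases hS' s0 hs0S with rfl | ⟨h1, h2, b, hb⟩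
          · exact absurd hs0ne (by simp)
          refine Or.inr ⟨⟨s0, hs0S, h1⟩, ?_, ⟨b, s0, hs0S, hb⟩⟩
          rintro c1 ⟨s, hsS, hc1⟩ c2 h12
          rcases hS' s hsS with rfl | ⟨_, hup, _⟩
          · exact hc1.elim
          · exact ⟨s, hsS, hup c1 hc1 c2 h12⟩ }
  have hcc : @CoreCompact (Option {B : Dcompletion X // B ∈ 𝒟}) tC := by
    intro W hW x hx
    rcases hW with rfl | ⟨hnone, hup, b0, hb0⟩
    · exact hx.elim
    have hbs : ∃ bs : {B : Dcompletion X // B ∈ 𝒟}, some bs ∈ W ∧ (x = none ∨ x = some bs) := by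
      cases x with
      | none => exact ⟨b0, hb0, Or.inl rfl⟩
      | some b => exact ⟨b, hx, Or.inr rfl⟩
    obtain ⟨bs, hbsW, hxcase⟩ := hbs
    set V' : Set (Option {B : Dcompletion X // B ∈ 𝒟}) :=
      {y | y = none ∨ ∃ c, y = some c ∧ bs.1.1 ⊆ c.1.1} with hV'def
    have hV'open : @IsOpen _ tC V' := by
      refine Or.inr ⟨Or.inl rfl, ?_, ⟨bs, Or.inr ⟨bs, rfl, subset_rfl⟩⟩⟩
      rintro c1 (h | ⟨c, hc, hsub⟩) c2 h12
      · exact absurd h (by simp)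
      · have : c = c1 := by injection hc.symm
        subst this
        exact Or.inr ⟨c2, rfl, hsub.trans h12⟩
    have hxV' : x ∈ V' := by
      rcases hxcase with rfl | rfl
      · exact Or.inl rfl
      · exact Or.inr ⟨bs, rfl, subset_rfl⟩
    refine ⟨V', hV'open, hxV', ?_⟩
    intro S' hS'open hcov
    obtain ⟨W', hW'S, hbsW'⟩ := hcov hbsW
    rcases hS'open W' hW'S with rfl | ⟨hn', hup', _⟩
    · exact hbsW'.elim
    refine ⟨{W'}, ?_, ?_⟩
    · intro s hs
      simp only [Finset.coe_singleton, Set.mem_singleton_iff] at hs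
      rcases hs with rfl; assumption
    · rintro y (rfl | ⟨c, rfl, hsub⟩)
      · exact ⟨W', by simp, hn'⟩
      · exact ⟨W', by simp, hup' bs hbsW' c hsub⟩
  set ρ : Option {B : Dcompletion X // B ∈ 𝒟} → Dcompletion X :=
    fun c => c.elim S Subtype.val with hρdef
  have hρc : @Continuous _ (Dcompletion X) tC (dTop X) ρ := by
    rw [dTop_eq]
    apply continuous_generateFrom_iff.mpr
    rintro s ⟨U, hU, rfl⟩
    show @IsOpen _ tC (ρ ⁻¹' {A : Dcompletion X | (A.1 ∩ U).Nonempty})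
    by_cases hSU : (S.1 ∩ U).Nonempty
    · refine Or.inr ⟨?_, ?_, ?_⟩
      · show ((ρ none).1 ∩ U).Nonempty
        simpa [hρdef] using hSU
      · intro b1 hb1 b2 h12
        show ((ρ (some b2)).1 ∩ U).Nonempty
        have hb1' : ((ρ (some b1)).1 ∩ U).Nonempty := hb1
        exact hb1'.mono (Set.inter_subset_inter_left _ h12)
      · have h1 : (U ∩ closure (⋃ B ∈ 𝒟, B.1)).Nonempty := by
          rw [← hS]
          obtain ⟨x, hx1, hx2⟩ := hSU
          exact ⟨x, hx2, hx1⟩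
        have h2 : (U ∩ ⋃ B ∈ 𝒟, B.1).Nonempty :=
          closure_nonempty_iff.mp (h1.mono hU.inter_closure)
        obtain ⟨x, hxU, hx⟩ := h2
        simp only [Set.mem_iUnion] at hx
        obtain ⟨B, hB, hxB⟩ := hx
        exact ⟨⟨B, hB⟩, ⟨x, hxB, hxU⟩⟩
    · refine Or.inl ?_
      ext c
      simp only [Set.mem_preimage, Set.mem_setOf_eq, Set.mem_empty_iff_false, iff_false]
      cases c with
      | none =>
          show ¬(S.1 ∩ U).Nonempty
          exact hSU
      | some b =>
          intro hcon
          apply hSU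
          have hsub : b.1.1 ⊆ S.1 := by
            rw [hS]
            exact (Set.subset_biUnion_of_mem b.2).trans subset_closure
          exact Set.Nonempty.mono (Set.inter_subset_inter_left _ hsub) hcon
  have hopen := hV _ tC hcc ρ hρc
  have hnone : (none : Option {B : Dcompletion X // B ∈ 𝒟}) ∈ ρ ⁻¹' V := by
    show ρ none ∈ V
    simpa [hρdef] using hSV
  rcases hopen with hemp | ⟨_, _, b, hb⟩
  · rw [hemp] at hnone
    exact hnone.elim
  · exact ⟨b.1, b.2, hb⟩

end Probes

end S11

namespace S11

open TopologicalSpace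

section KeyMeets

variable {X : Type u} [TopologicalSpace X]

/-- The crucial step: every member of a ccg-open set of the D-completion meets the
preimage of that set under `etaD`. -/
theorem key_meets {V : Set (Dcompletion X)}
    (hV : @ccgOpen (Dcompletion X) (dTop X) V)
    (A : Dcompletion X) (hA : A ∈ V) :
    ∃ x ∈ A.1, etaD x ∈ V := by
  by_contra hcon
  push_neg at hcon
  classical
  -- the auxiliary monotone convergence space: closed tapered subsets of `A` outside `V`,
  -- together with two incomparable top elements
  set M : Type u := {B : Dcompletion X // B.1 ⊆ A.1 ∧ B ∉ V} with hM
  set Y : Type u := M ⊕ ULift.{u} Bool with hYdef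
  set gen1 : Set X → Set Y := fun U => {y | ∀ m : M, y = Sum.inl m → (m.1.1 ∩ U).Nonempty}
    with hgen1
  set 𝒮 : Set (Set Y) := {s | ∃ U : Set X, IsOpen U ∧ s = gen1 U} ∪
    {{Sum.inr (ULift.up true)}, {Sum.inr (ULift.up false)}} with h𝒮
  letI tY : TopologicalSpace Y := generateFrom 𝒮
  have hsingmem : ∀ v : ULift.{u} Bool, ({Sum.inr v} : Set Y) ∈ 𝒮 := by
    rintro ⟨b⟩
    cases b
    · exact Set.mem_union_right _ (Set.mem_insert_of_mem _ rfl)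
    · exact Set.mem_union_right _ (Set.mem_insert _ _)
  -- specialization order computations
  have s2 : ∀ (m : M) (v : ULift.{u} Bool), @specLE Y tY (Sum.inl m) (Sum.inr v) := by
    intro m v
    refine (specLE_generateFrom_iff 𝒮 _ _).mpr ?_
    rintro s (⟨U, hU, rfl⟩ | hs)
    · intro _ m' hm'
      cases hm'
    · rcases hs with rfl | rfl <;> exact fun ha => absurd ha (by simp)
  have s1 : ∀ m m' : M, @specLE Y tY (Sum.inl m) (Sum.inl m') ↔ m.1.1 ⊆ m'.1.1 := by
    intro m m'
    constructor
    · intro h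
      by_contra hns
      obtain ⟨x, hxm, hxm'⟩ := Set.not_subset.mp hns
      have hgen : gen1 (m'.1.1ᶜ) ∈ 𝒮 := Set.mem_union_left _ ⟨_, m'.1.2.1.isOpen_compl, rfl⟩
      have h1 : Sum.inl m ∈ gen1 (m'.1.1ᶜ) := by
        intro m₀ hm₀
        injection hm₀ with hm₀'
        rw [← hm₀']
        exact ⟨x, hxm, hxm'⟩
      have h2 := (specLE_generateFrom_iff 𝒮 _ _).mp h _ hgen h1
      obtain ⟨y, hy1, hy2⟩ := h2 m' rfl
      exact hy2 hy1
    · intro hsub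
      refine (specLE_generateFrom_iff 𝒮 _ _).mpr ?_
      rintro s (⟨U, hU, rfl⟩ | hs)
      · intro ha m₀ hm₀
        injection hm₀ with hm₀'
        subst hm₀'
        exact (ha m rfl).mono (Set.inter_subset_inter_left _ hsub)
      · rcases hs with rfl | rfl <;> exact fun ha => absurd ha (by simp)
  have s3 : ∀ (v : ULift.{u} Bool) (y : Y), @specLE Y tY (Sum.inr v) y → y = Sum.inr v := by
    intro v y h
    exact (specLE_generateFrom_iff 𝒮 _ _).mp h {Sum.inr v} (hsingmem v) rfl
  -- T0
  have hT0 : @T0Space Y tY := by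
    rw [t0Space_iff_inseparable]
    intro a b hab
    rw [@inseparable_iff_mem_closure Y tY] at hab
    cases a with
    | inr v => exact (s3 v b hab.1).symm
    | inl m =>
      cases b with
      | inr v => exact s3 v _ hab.2
      | inl m' =>
        have h1 := (s1 m m').mp hab.1
        have h2 := (s1 m' m).mp hab.2
        have hmm : m = m' := Subtype.ext (Subtype.ext (Set.Subset.antisymm h1 h2))
        rw [hmm]
  -- monotone convergence
  have hmc : @MonotoneConvergenceSpace Y tY := by
    refine ⟨hT0, ?_⟩
    intro D hD
    by_cases hinr : ∃ v, Sum.inr v ∈ D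
    · obtain ⟨v, hv⟩ := hinr
      refine ⟨Sum.inr v, Set.Subset.antisymm ?_ ?_⟩
      · refine closure_minimal ?_ isClosed_closure
        intro d hd
        obtain ⟨c, hc, hdc, hvc⟩ := hD.2 d hd _ hv
        rw [s3 v c hvc] at hdc
        exact hdc
      · exact closure_mono (Set.singleton_subset_iff.mpr hv)
    · push_neg at hinr
      have hall : ∀ d ∈ D, ∃ m : M, d = Sum.inl m := by
        intro d hd
        cases d with
        | inl m => exact ⟨m, rfl⟩
        | inr v => exact absurd hd (hinr v)
      set 𝒟 : Set (Dcompletion X) := {B | ∃ hm : B.1 ⊆ A.1 ∧ B ∉ V, Sum.inl (⟨B, hm⟩ : M) ∈ D}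
        with h𝒟
      have h𝒟ne : 𝒟.Nonempty := by
        obtain ⟨d, hd⟩ := hD.1
        obtain ⟨m, rfl⟩ := hall d hd
        exact ⟨m.1, m.2, hd⟩
      have hDdir' : ∀ B₁ ∈ 𝒟, ∀ B₂ ∈ 𝒟, ∃ B₃ ∈ 𝒟, B₁.1 ⊆ B₃.1 ∧ B₂.1 ⊆ B₃.1 := by
        rintro B₁ ⟨h1, hd1⟩ B₂ ⟨h2, hd2⟩
        obtain ⟨c, hc, hc1, hc2⟩ := hD.2 _ hd1 _ hd2
        obtain ⟨m₃, rfl⟩ := hall c hc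
        exact ⟨m₃.1, ⟨m₃.2, hc⟩, (s1 _ _).mp hc1, (s1 _ _).mp hc2⟩
      set S₀ : Set X := closure (⋃ B ∈ 𝒟, B.1) with hS₀
      have htap : Tapered X S₀ := tapered_dirUnion 𝒟 h𝒟ne hDdir'
      set Sc : Dcompletion X := ⟨S₀, isClosed_closure, htap⟩ with hSc
      have hS₀A : S₀ ⊆ A.1 := by
        apply closure_minimal _ A.2.1
        refine Set.iUnion₂_subset ?_
        intro B hB
        exact hB.choose.1
      have hScV : Sc ∉ V := by
        intro hmem
        obtain ⟨B, hB, hBV⟩ := lemA hV 𝒟 h𝒟ne hDdir' Sc rfl hmem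
        exact hB.choose.2 hBV
      refine ⟨Sum.inl ⟨Sc, hS₀A, hScV⟩, Set.Subset.antisymm ?_ ?_⟩
      · refine closure_minimal ?_ isClosed_closure
        intro d hd
        obtain ⟨m, rfl⟩ := hall d hd
        have hmem𝒟 : m.1 ∈ 𝒟 := ⟨m.2, hd⟩
        have hsub : m.1.1 ⊆ S₀ := (Set.subset_biUnion_of_mem hmem𝒟).trans subset_closure
        exact (s1 m ⟨Sc, hS₀A, hScV⟩).mpr hsub
      · refine closure_minimal (Set.singleton_subset_iff.mpr ?_) isClosed_closure
        apply gen_closure_mem 𝒮 D hD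
        rintro s (⟨U, hU, rfl⟩ | hs)
        · intro hts
          have hSU : (S₀ ∩ U).Nonempty := hts _ rfl
          have h1 : (U ∩ ⋃ B ∈ 𝒟, B.1).Nonempty := by
            refine closure_nonempty_iff.mp (Set.Nonempty.mono hU.inter_closure ?_)
            obtain ⟨x, hx1, hx2⟩ := hSU
            exact ⟨x, hx2, hx1⟩
          obtain ⟨x, hxU, hx⟩ := h1
          simp only [Set.mem_iUnion] at hx
          obtain ⟨B, hB, hxB⟩ := hx
          refine ⟨Sum.inl ⟨B, hB.choose⟩, hB.choose_spec, ?_⟩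
          intro m' hm'
          injection hm' with hm''
          rw [← hm'']
          exact ⟨x, hxB, hxU⟩
        · rcases hs with rfl | rfl <;> exact fun hts => absurd hts (by simp)
  -- the test map
  have hsubx : ∀ x ∈ A.1, (etaD x).1 ⊆ A.1 := fun x hx =>
    closure_minimal (Set.singleton_subset_iff.mpr hx) A.2.1
  set f : X → Y := fun x =>
    if hx : x ∈ A.1 then Sum.inl ⟨etaD x, hsubx x hx, hcon x hx⟩ else Sum.inr (ULift.up true)
    with hfdef
  have hfx : ∀ x (hx : x ∈ A.1), f x = Sum.inl ⟨etaD x, hsubx x hx, hcon x hx⟩ := by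
    intro x hx
    rw [hfdef]
    exact dif_pos hx
  have hfx' : ∀ x, x ∉ A.1 → f x = Sum.inr (ULift.up true) := by
    intro x hx
    rw [hfdef]
    exact dif_neg hx
  have hfc : @Continuous X Y _ tY f := by
    apply continuous_generateFrom_iff.mpr
    rintro s (⟨U, hU, rfl⟩ | hs)
    · have hpre : f ⁻¹' gen1 U = A.1ᶜ ∪ U := by
        ext x
        by_cases hx : x ∈ A.1
        · simp only [Set.mem_preimage, Set.mem_union, Set.mem_compl_iff, hx, not_true,
            false_or]
          rw [hfx x hx]
          constructor
          · intro hmem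
            have h1 : ((etaD x).1 ∩ U).Nonempty := hmem _ rfl
            exact (clx_inter_open hU x).mp h1
          · intro hxU m' hm'
            injection hm' with hm''
            rw [← hm'']
            exact (clx_inter_open hU x).mpr hxU
        · simp only [Set.mem_preimage, Set.mem_union, Set.mem_compl_iff, hx, not_false_iff,
            true_or, iff_true]
          rw [hfx' x hx]
          intro m' hm'
          cases hm'
      rw [hpre]
      exact A.2.1.isOpen_compl.union hU
    · rcases hs with rfl | rfl
      · have hpre : f ⁻¹' {Sum.inr (ULift.up true)} = A.1ᶜ := by
          ext x
          by_cases hx : x ∈ A.1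
          · simp only [Set.mem_preimage, Set.mem_compl_iff, hx, not_true, iff_false]
            rw [hfx x hx]
            simp
          · simp only [Set.mem_preimage, Set.mem_compl_iff, hx, not_false_iff, iff_true]
            rw [hfx' x hx]
            rfl
        rw [hpre]
        exact A.2.1.isOpen_compl
      · have hpre : f ⁻¹' {Sum.inr (ULift.up false)} = ∅ := by
          ext x
          simp only [Set.mem_preimage, Set.mem_empty_iff_false, iff_false]
          by_cases hx : x ∈ A.1
          · rw [hfx x hx]; simp
          · rw [hfx' x hx]
            intro hbad
            exact Bool.noConfusion (congrArg ULift.down (Sum.inr.inj hbad))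
        rw [hpre]
        exact isOpen_empty
  -- use taperedness of A to get a supremum, and derive a contradiction
  obtain ⟨s, hsup⟩ := A.2.2 Y tY hmc f hfc
  have hubT : IsUBWrt (@specLE Y tY) (f '' A.1) (Sum.inr (ULift.up true)) := by
    rintro d ⟨x, hx, rfl⟩
    rw [hfx x hx]
    exact s2 _ _
  have hubF : IsUBWrt (@specLE Y tY) (f '' A.1) (Sum.inr (ULift.up false)) := by
    rintro d ⟨x, hx, rfl⟩
    rw [hfx x hx]
    exact s2 _ _
  cases s with
  | inr v =>
      have h1 := s3 v _ (hsup.2 _ hubT)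
      have h2 := s3 v _ (hsup.2 _ hubF)
      rw [← h1] at h2
      have hbool : (false : Bool) = true := congrArg ULift.down (Sum.inr.inj h2)
      simp at hbool
  | inl m =>
      have hAm : A.1 ⊆ m.1.1 := by
        intro x hx
        have hub := hsup.1 (f x) ⟨x, hx, rfl⟩
        rw [hfx x hx] at hub
        exact (s1 _ m).mp hub (subset_closure rfl)
      have hmA : m.1 = A := Subtype.ext (Set.Subset.antisymm m.2.1 hAm)
      exact m.2.2 (by rw [hmA]; exact hA)

end KeyMeets

end S11


/-- the standard D-completion of a core compactly generated space is again
core compactly generated. -/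
theorem stmt11 {X : Type u} [TopologicalSpace X] [T0Space X] (h : CCGenerated X) :
    @CCGenerated (Dcompletion X) (dTop X) := by
  letI tD : TopologicalSpace (Dcompletion X) := dTop X
  show ccgTopology (Dcompletion X) = dTop X
  rw [TopologicalSpace.ext_iff]
  intro V
  constructor
  · -- hard direction: every ccg-open set is open in the D-completion topology
    intro hV
    have hV' : @ccgOpen (Dcompletion X) (dTop X) V := hV
    have hUopen : IsOpen {x : X | S11.etaD x ∈ V} := by
      have hccg : ccgOpen X {x : X | S11.etaD x ∈ V} := by
        intro C tC hc ρ hρ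
        exact hV' C tC hc (S11.etaD ∘ ρ) (S11.etaD_continuous.comp hρ)
      have hEq : @IsOpen X (ccgTopology X) {x : X | S11.etaD x ∈ V} =
          @IsOpen X _ {x : X | S11.etaD x ∈ V} :=
        congrArg (fun t => @IsOpen X t {x : X | S11.etaD x ∈ V}) h
      exact cast hEq hccg
    have heq : V = {A : Dcompletion X | (A.1 ∩ {x : X | S11.etaD x ∈ V}).Nonempty} := by
      apply Set.Subset.antisymm
      · intro A hAV
        exact S11.key_meets hV' A hAV
      · rintro A ⟨x, hxA, hxU⟩
        exact S11.ccgOpen_upper hV' hxU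
          (closure_minimal (Set.singleton_subset_iff.mpr hxA) A.2.1)
    rw [heq, S11.dTop_eq]
    exact .basic _ ⟨_, hUopen, rfl⟩
  · -- easy direction: D-completion-open sets are ccg-open
    intro hV C tC hc ρ hρ
    exact hV.preimage hρ
end

section
/- Let f : X → Y be a continuous map where X is a well-filtered space. If Q is the intersection of a filtered family 𝒦 of compact saturated subsets of X, then ⋂_{K ∈ 𝒦} ↑f(K) = ↑f(Q). -/
open Set TopologicalSpace

universe u

/-- if `f : X → Y` is continuous with `X` well-filtered and `Q` is the
intersection of a filtered family `𝒦` of compact saturated subsets of `X`, then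
`⋂_{K ∈ 𝒦} ↑f(K) = ↑f(Q)`. -/
theorem stmt12 {X Y : Type u} [TopologicalSpace X] [TopologicalSpace Y]
    (hX : WellFiltered X) (f : X → Y) (hf : Continuous f)
    (𝒦 : Set (Set X)) (hne : 𝒦.Nonempty)
    (hcs : ∀ K ∈ 𝒦, IsCompact K ∧ Saturated K)
    (hfil : ∀ K₁ ∈ 𝒦, ∀ K₂ ∈ 𝒦, ∃ K₃ ∈ 𝒦, K₃ ⊆ K₁ ∧ K₃ ⊆ K₂) :
    (⋂ K ∈ 𝒦, upSet (f '' K)) = upSet (f '' ⋂₀ 𝒦) := by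
  apply Set.Subset.antisymm
  · intro y hy
    by_cases hemp : ∀ K ∈ 𝒦, K.Nonempty
    · -- key: ⋂₀𝒦 meets C := f⁻¹'(closure {y})
      set C : Set X := f ⁻¹' closure ({y} : Set Y) with hC
      have hCc : IsClosed C := (isClosed_closure).preimage hf
      have hmeet : (⋂₀ 𝒦 ∩ C).Nonempty := by
        by_contra h
        rw [Set.not_nonempty_iff_eq_empty] at h
        have hsub : ⋂₀ 𝒦 ⊆ Cᶜ := by
          intro x hx hxC
          exact absurd (Set.mem_inter hx hxC) (by simp [h])
        obtain ⟨K, hK, hKsub⟩ := hX.2 𝒦 hne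
          (fun K hK => ⟨hemp K hK, (hcs K hK).1, (hcs K hK).2⟩) hfil Cᶜ
          hCc.isOpen_compl hsub
        have := Set.mem_iInter₂.1 hy K hK
        obtain ⟨z, ⟨a, haK, rfl⟩, hspec⟩ := this
        exact hKsub haK hspec
      obtain ⟨a, ha, haC⟩ := hmeet
      exact ⟨f a, ⟨a, ha, rfl⟩, haC⟩
    · push_neg at hemp
      obtain ⟨K, hK, hKe⟩ := hemp
      have := Set.mem_iInter₂.1 hy K hK
      rw [hKe] at this
      obtain ⟨z, ⟨a, ha, rfl⟩, -⟩ := this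
      exact absurd ha (Set.notMem_empty a)
  · rintro y ⟨z, ⟨a, ha, rfl⟩, hspec⟩
    exact Set.mem_iInter₂.2 fun K hK => ⟨f a, ⟨a, ha K hK, rfl⟩, hspec⟩
end

section
/- If X is a well-filtered space, then its Smyth power space P_S(X) is well-filtered, and in particular a monotone convergence space whose specialization order (reverse inclusion) makes Q(X) a dcpo with directed suprema given by filtered intersections. -/
open Set TopologicalSpace

universe u

/-- The nonempty compact saturated subsets of `X`. -/
abbrev QSet (X : Type u) [TopologicalSpace X] :=
  {K : Set X // K.Nonempty ∧ IsCompact K ∧ Saturated K}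

/-- The upper Vietoris topology on `Q(X)`, generated by the sets `☐U = {K : K ⊆ U}`. -/
def upperVietoris (X : Type u) [TopologicalSpace X] : TopologicalSpace (QSet X) :=
  generateFrom {s : Set (QSet X) |
    ∃ U : Set X, IsOpen U ∧ s = {K : QSet X | (K : Set X) ⊆ U}}

/-- Reverse inclusion, the specialization order of the Smyth power space. -/
def revIncl {X : Type u} [TopologicalSpace X] (K L : QSet X) : Prop :=
  (L : Set X) ⊆ (K : Set X)

/- ======================= auxiliary lemmas ======================= -/
namespace Stmt16

section Basic
variable {X : Type u} [TopologicalSpace X]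

lemma specLE_refl (x : X) : specLE x x := subset_closure rfl

lemma specLE_trans {x y z : X} (h1 : specLE x y) (h2 : specLE y z) : specLE x z := by
  have : closure ({y} : Set X) ⊆ closure {z} := closure_minimal (by simpa using (show y ∈ closure ({z} : Set X) from h2)) isClosed_closure
  exact this h1

lemma mem_open_of_specLE {U : Set X} (hU : IsOpen U) {a b : X} (ha : a ∈ U) (h : specLE a b) :
    b ∈ U := by
  obtain ⟨c, hcU, hc⟩ := (mem_closure_iff.mp h) U hU ha
  rwa [← hc]

lemma saturated_mem {K : Set X} (hK : Saturated K) {a b : X} (ha : a ∈ K) (h : specLE a b) :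
    b ∈ K := by
  rw [hK]
  exact fun U hU => mem_open_of_specLE hU.1 (hU.2 ha) h

lemma saturated_of_upper {K : Set X} (h : ∀ a ∈ K, ∀ b, specLE a b → b ∈ K) : Saturated K := by
  apply subset_antisymm (fun x hx => mem_sInter.mpr fun U hU => hU.2 hx)
  intro z hz
  by_contra hzK
  have hKsub : K ⊆ (closure ({z} : Set X))ᶜ := by
    intro a ha
    intro hacl
    exact hzK (h a ha z hacl)
  have := mem_sInter.mp hz _ ⟨isClosed_closure.isOpen_compl, hKsub⟩
  exact this (subset_closure rfl)

lemma subset_upSet (A : Set X) : A ⊆ upSet A := fun a ha => ⟨a, ha, specLE_refl a⟩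

lemma upSet_mono {A B : Set X} (h : A ⊆ B) : upSet A ⊆ upSet B :=
  fun _ ⟨a, ha, hle⟩ => ⟨a, h ha, hle⟩

lemma upSet_subset_of_isOpen {U A : Set X} (hU : IsOpen U) (hAU : A ⊆ U) : upSet A ⊆ U :=
  fun _ ⟨a, ha, hle⟩ => mem_open_of_specLE hU (hAU ha) hle

lemma saturated_upSet (A : Set X) : Saturated (upSet A) :=
  saturated_of_upper fun _ ⟨a, ha, h1⟩ b h2 => ⟨a, ha, specLE_trans h1 h2⟩

lemma isCompact_upSet {A : Set X} (h : IsCompact A) : IsCompact (upSet A) := by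
  apply isCompact_of_finite_subcover
  intro ι W hW hcov
  obtain ⟨t, ht⟩ := h.elim_finite_subcover W hW ((subset_upSet A).trans hcov)
  exact ⟨t, upSet_subset_of_isOpen (isOpen_biUnion fun i _ => hW i) ht⟩

lemma upSet_nonempty {A : Set X} (h : A.Nonempty) : (upSet A).Nonempty :=
  h.mono (subset_upSet A)

end Basic

section UV
variable {X : Type u} [TopologicalSpace X]

/-- neighborhood basis of boxes in the upper Vietoris topology -/
lemma exists_box {𝒰 : Set (QSet X)}
    (h : GenerateOpen {s : Set (QSet X) |
      ∃ U : Set X, IsOpen U ∧ s = {K : QSet X | (K : Set X) ⊆ U}} 𝒰) :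
    ∀ K ∈ 𝒰, ∃ U : Set X, IsOpen U ∧ (K : Set X) ⊆ U ∧
      ∀ L : QSet X, (L : Set X) ⊆ U → L ∈ 𝒰 := by
  induction h with
  | basic s hs =>
    obtain ⟨U, hU, rfl⟩ := hs
    exact fun K hK => ⟨U, hU, hK, fun L hL => hL⟩
  | univ => exact fun K _ => ⟨univ, isOpen_univ, subset_univ _, fun L _ => trivial⟩
  | inter s t _ _ ihs iht =>
    intro K hK
    obtain ⟨U1, hU1, hKU1, hL1⟩ := ihs K hK.1
    obtain ⟨U2, hU2, hKU2, hL2⟩ := iht K hK.2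
    exact ⟨U1 ∩ U2, hU1.inter hU2, subset_inter hKU1 hKU2,
      fun L hL => ⟨hL1 L (hL.trans inter_subset_left), hL2 L (hL.trans inter_subset_right)⟩⟩
  | sUnion S _ ih =>
    intro K hK
    obtain ⟨s, hs, hKs⟩ := hK
    obtain ⟨U, hU, hKU, hL⟩ := ih s hs K hKs
    exact ⟨U, hU, hKU, fun L hLU => ⟨s, hs, hL L hLU⟩⟩

lemma exists_box' {𝒰 : Set (QSet X)} (h : @IsOpen (QSet X) (upperVietoris X) 𝒰) {K : QSet X} (hK : K ∈ 𝒰) :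
    ∃ U : Set X, IsOpen U ∧ (K : Set X) ⊆ U ∧
      ∀ L : QSet X, (L : Set X) ⊆ U → L ∈ 𝒰 :=
  exists_box h K hK

lemma isOpen_box {U : Set X} (hU : IsOpen U) :
    @IsOpen (QSet X) (upperVietoris X) {K : QSet X | (K : Set X) ⊆ U} :=
  GenerateOpen.basic _ ⟨U, hU, rfl⟩

lemma specLE_uv_iff (K L : QSet X) :
    @specLE (QSet X) (upperVietoris X) K L ↔ (L : Set X) ⊆ (K : Set X) := by
  letI := upperVietoris X
  constructor
  · intro h
    have key : ∀ U : Set X, IsOpen U → (K : Set X) ⊆ U → (L : Set X) ⊆ U := by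
      intro U hU hKU
      obtain ⟨M, hM1, hM2⟩ := (mem_closure_iff.mp h) _ (isOpen_box hU) hKU
      rw [mem_singleton_iff] at hM2
      rwa [← hM2]
    intro x hx
    have hsat := K.2.2.2
    rw [hsat]
    exact mem_sInter.mpr fun U hU => key U hU.1 hU.2 hx
  · intro h
    rw [specLE, mem_closure_iff]
    intro o ho hKo
    obtain ⟨U, hU, hKU, hL⟩ := exists_box' ho hKo
    exact ⟨L, hL L (h.trans hKU), rfl⟩

lemma t0_uv : @T0Space (QSet X) (upperVietoris X) := by
  letI := upperVietoris X
  refine ⟨fun {K L} h => ?_⟩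
  have h1 : (L : Set X) ⊆ (K : Set X) :=
    (specLE_uv_iff K L).mp (specializes_iff_mem_closure.mp h.specializes')
  have h2 : (K : Set X) ⊆ (L : Set X) :=
    (specLE_uv_iff L K).mp (specializes_iff_mem_closure.mp h.specializes)
  exact Subtype.ext (subset_antisymm h2 h1)

/-- the union of the members of a compact family is compact -/
lemma isCompact_XiS {𝒜 : Set (QSet X)} (h : @IsCompact (QSet X) (upperVietoris X) 𝒜) :
    IsCompact (⋃ K ∈ 𝒜, (K : Set X)) := by
  letI := upperVietoris X
  apply isCompact_of_finite_subcover
  intro ι W hW hcov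
  classical
  have hsub : ∀ K ∈ 𝒜, ∃ F : Finset ι, (K : Set X) ⊆ ⋃ i ∈ F, W i := by
    intro K hK
    exact K.2.2.1.elim_finite_subcover W hW ((subset_biUnion_of_mem hK).trans hcov)
  have hcov2 : 𝒜 ⊆ ⋃ F : Finset ι, {K : QSet X | (K : Set X) ⊆ ⋃ i ∈ F, W i} := by
    intro K hK
    obtain ⟨F, hF⟩ := hsub K hK
    exact mem_iUnion.mpr ⟨F, hF⟩
  obtain ⟨t, ht⟩ := h.elim_finite_subcover _
    (fun F : Finset ι => isOpen_box (isOpen_biUnion fun i _ => hW i)) hcov2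
  refine ⟨t.sup id, ?_⟩
  intro x hx
  obtain ⟨K, hK, hxK⟩ := mem_iUnion₂.mp hx
  obtain ⟨F, hFt, hKF⟩ := mem_iUnion₂.mp (ht hK)
  obtain ⟨i, hiF, hxi⟩ := mem_iUnion₂.mp (hKF hxK)
  have hsubF : F ⊆ t.sup id := Finset.le_sup (f := id) hFt
  exact mem_iUnion₂.mpr ⟨i, hsubF hiF, hxi⟩

end UV

section Inter
variable {X : Type u} [TopologicalSpace X]

lemma wf_inter (hwf : WellFiltered X) {𝒟 : Set (QSet X)} (hne : 𝒟.Nonempty)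
    (hdir : ∀ a ∈ 𝒟, ∀ b ∈ 𝒟, ∃ c ∈ 𝒟, (c : Set X) ⊆ (a : Set X) ∧ (c : Set X) ⊆ (b : Set X))
    {U : Set X} (hU : IsOpen U) (hsub : (⋂ K ∈ 𝒟, (K : Set X)) ⊆ U) :
    ∃ K ∈ 𝒟, (K : Set X) ⊆ U := by
  have h := hwf.2 ((fun K : QSet X => (K : Set X)) '' 𝒟) (hne.image _)
    (by rintro K ⟨L, hL, rfl⟩; exact L.2)
    (by rintro K1 ⟨L1, hL1, rfl⟩ K2 ⟨L2, hL2, rfl⟩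
        obtain ⟨c, hc, h1, h2⟩ := hdir L1 hL1 L2 hL2
        exact ⟨(c : Set X), ⟨c, hc, rfl⟩, h1, h2⟩)
    U hU (by rwa [sInter_image])
  obtain ⟨K, ⟨L, hL, rfl⟩, hKU⟩ := h
  exact ⟨L, hL, hKU⟩

lemma qset_inter (hwf : WellFiltered X) {𝒟 : Set (QSet X)} (hne : 𝒟.Nonempty)
    (hdir : ∀ a ∈ 𝒟, ∀ b ∈ 𝒟, ∃ c ∈ 𝒟, (c : Set X) ⊆ (a : Set X) ∧ (c : Set X) ⊆ (b : Set X)) :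
    (⋂ K ∈ 𝒟, (K : Set X)).Nonempty ∧ IsCompact (⋂ K ∈ 𝒟, (K : Set X)) ∧
      Saturated (⋂ K ∈ 𝒟, (K : Set X)) := by
  refine ⟨?_, ?_, ?_⟩
  · by_contra hc
    rw [not_nonempty_iff_eq_empty] at hc
    obtain ⟨K, hK, hKe⟩ := wf_inter hwf hne hdir isOpen_empty (by rw [hc])
    exact absurd (hKe.antisymm (empty_subset _) ▸ K.2.1) (by simp [Set.not_nonempty_empty])
  · apply isCompact_of_finite_subcover
    intro ι W hW hcov
    obtain ⟨K, hK, hKU⟩ := wf_inter hwf hne hdir (isOpen_iUnion hW) hcov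
    obtain ⟨t, ht⟩ := K.2.2.1.elim_finite_subcover W hW hKU
    exact ⟨t, (biInter_subset_of_mem hK).trans ht⟩
  · apply saturated_of_upper
    intro a ha b hb
    exact mem_iInter₂.mpr fun K hK => saturated_mem K.2.2.2 (mem_iInter₂.mp ha K hK) hb

end Inter

section Chain
variable {α : Type u} [TopologicalSpace α]

lemma chain_least {c : Set (Set α)} (hch : IsChain (· ⊆ ·) c) (hcne : c.Nonempty) :
    ∀ u : Finset (Set α), ↑u ⊆ c → ∃ t₀ ∈ c, ∀ t ∈ u, t₀ ⊆ t := by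
  intro u
  classical
  induction u using Finset.induction_on with
  | empty => exact fun _ => ⟨hcne.choose, hcne.choose_spec, by simp⟩
  | @insert a u ha ih =>
    intro hsub
    have hac : a ∈ c := hsub (by simp)
    obtain ⟨t₀, ht₀c, ht₀⟩ := ih (subset_trans (by simp) hsub)
    rcases eq_or_ne a t₀ with rfl | hne
    · exact ⟨a, hac, fun t ht => by
        rcases Finset.mem_insert.mp ht with rfl | ht
        · exact subset_rfl
        · exact ht₀ t ht⟩
    · rcases hch hac ht₀c hne with h1 | h2
      · exact ⟨a, hac, fun t ht => by
          rcases Finset.mem_insert.mp ht with rfl | ht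
          · exact subset_rfl
          · exact h1.trans (ht₀ t ht)⟩
      · exact ⟨t₀, ht₀c, fun t ht => by
          rcases Finset.mem_insert.mp ht with rfl | ht
          · exact h2
          · exact ht₀ t ht⟩

lemma compact_chain {s : Set α} (hs : IsCompact s) {c : Set (Set α)}
    (hch : IsChain (· ⊆ ·) c) (hcne : c.Nonempty)
    (hcl : ∀ t ∈ c, IsClosed t) (hne : ∀ t ∈ c, (s ∩ t).Nonempty) :
    (s ∩ ⋂₀ c).Nonempty := by
  classical
  by_contra hcon
  rw [not_nonempty_iff_eq_empty] at hcon
  have hcov : s ⊆ ⋃ t : c, ((t : Set α))ᶜ := by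
    intro x hx
    have hxn : x ∉ ⋂₀ c := fun hmem => by
      have : x ∈ s ∩ ⋂₀ c := ⟨hx, hmem⟩
      simp [hcon] at this
    obtain ⟨t, htc, hxt⟩ := by simpa [mem_sInter] using hxn
    exact mem_iUnion.mpr ⟨⟨t, htc⟩, hxt⟩
  obtain ⟨u, hu⟩ := hs.elim_finite_subcover _ (fun t : c => (hcl t t.2).isOpen_compl) hcov
  obtain ⟨t₀, ht₀c, ht₀⟩ := chain_least hch hcne (u.image Subtype.val)
    (by intro t ht; obtain ⟨t', _, rfl⟩ := Finset.mem_image.mp ht; exact t'.2)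
  obtain ⟨x, hxs, hxt₀⟩ := hne t₀ ht₀c
  obtain ⟨t, htu, hxt⟩ := mem_iUnion₂.mp (hu hxs)
  exact hxt (ht₀ t (Finset.mem_image.mpr ⟨t, htu, rfl⟩) hxt₀)

end Chain

section Main
variable {X : Type u} [TopologicalSpace X]

lemma wf_uv (hwf : WellFiltered X) : @WellFiltered (QSet X) (upperVietoris X) := by
  letI tQ : TopologicalSpace (QSet X) := upperVietoris X
  refine ⟨t0_uv, ?_⟩
  intro 𝒦 h𝒦ne h𝒦mem h𝒦filt 𝒰 h𝒰 hsub
  by_contra hcon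
  push_neg at hcon
  set S : Set (Set (QSet X)) :=
    {D | IsClosed D ∧ D ⊆ 𝒰ᶜ ∧ ∀ K ∈ 𝒦, (D ∩ K).Nonempty} with hSdef
  have hUc : 𝒰ᶜ ∈ S := by
    refine ⟨h𝒰.isClosed_compl, subset_rfl, ?_⟩
    intro K hK
    obtain ⟨A, hAK, hA𝒰⟩ := not_subset.mp (hcon K hK)
    exact ⟨A, hA𝒰, hAK⟩
  obtain ⟨𝒞, h𝒞⟩ := zorn_superset S (by
    intro c hcS hchain
    rcases c.eq_empty_or_nonempty with rfl | hcne
    · exact ⟨𝒰ᶜ, hUc, by simp⟩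
    · refine ⟨⋂₀ c, ⟨isClosed_sInter (fun D hD => (hcS hD).1), ?_, ?_⟩,
        fun s hs => sInter_subset_of_mem hs⟩
      · exact (sInter_subset_of_mem hcne.choose_spec).trans (hcS hcne.choose_spec).2.1
      · intro K hK
        have h1 := compact_chain (h𝒦mem K hK).2.1 hchain hcne (fun D hD => (hcS hD).1)
          (fun D hD => by rw [inter_comm]; exact (hcS hD).2.2 K hK)
        rwa [inter_comm] at h1)
  have h𝒞closed : IsClosed 𝒞 := h𝒞.prop.1
  have h𝒞U : 𝒞 ⊆ 𝒰ᶜ := h𝒞.prop.2.1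
  have h𝒞K : ∀ K ∈ 𝒦, (𝒞 ∩ K).Nonempty := h𝒞.prop.2.2
  set Kint : Set X := ⋂ B ∈ 𝒞, (B : Set X) with hKintdef
  have claim : ∀ V : Set X, IsOpen V → (∀ B ∈ 𝒞, ¬((B : Set X) ⊆ V)) → ¬(Kint ⊆ V) := by
    intro V hV hno hKV
    set G : Set (QSet X) → Set X := fun R => upSet ((⋃ B ∈ R, (B : Set X)) ∩ Vᶜ) with hGdef
    have hTne : ∀ K ∈ 𝒦, ((⋃ B ∈ 𝒞 ∩ K, (B : Set X)) ∩ Vᶜ).Nonempty := by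
      intro K hK
      obtain ⟨B, hB𝒞, hBK⟩ := h𝒞K K hK
      obtain ⟨b, hbB, hbV⟩ := not_subset.mp (hno B hB𝒞)
      exact ⟨b, mem_iUnion₂.mpr ⟨B, ⟨hB𝒞, hBK⟩, hbB⟩, hbV⟩
    have hGmem : ∀ K ∈ 𝒦, (G (𝒞 ∩ K)).Nonempty ∧ IsCompact (G (𝒞 ∩ K)) ∧
        Saturated (G (𝒞 ∩ K)) := by
      intro K hK
      refine ⟨upSet_nonempty (hTne K hK), isCompact_upSet ?_, saturated_upSet _⟩
      exact (isCompact_XiS ((h𝒦mem K hK).2.1.inter_left h𝒞closed)).inter_right hV.isClosed_compl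
    have hGmono : ∀ K1 K2 : Set (QSet X), K1 ⊆ K2 → G (𝒞 ∩ K1) ⊆ G (𝒞 ∩ K2) := by
      intro K1 K2 h12
      apply upSet_mono
      apply inter_subset_inter_left
      exact biUnion_subset_biUnion_left (inter_subset_inter_right _ h12)
    set 𝒢 : Set (Set X) := (fun K => G (𝒞 ∩ K)) '' 𝒦 with h𝒢def
    have hzex : ∃ z ∈ ⋂₀ 𝒢, z ∉ V := by
      by_contra hc
      push_neg at hc
      obtain ⟨E, ⟨K, hK, rfl⟩, hEV⟩ := hwf.2 𝒢 (h𝒦ne.image _)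
        (by rintro E ⟨K, hK, rfl⟩; exact hGmem K hK)
        (by rintro E1 ⟨K1, hK1, rfl⟩ E2 ⟨K2, hK2, rfl⟩
            obtain ⟨K3, hK3, h31, h32⟩ := h𝒦filt K1 hK1 K2 hK2
            exact ⟨G (𝒞 ∩ K3), ⟨K3, hK3, rfl⟩, hGmono _ _ h31, hGmono _ _ h32⟩)
        V hV hc
      obtain ⟨b, hbT⟩ := hTne K hK
      exact hbT.2 (hEV (subset_upSet _ hbT))
    obtain ⟨z, hz𝒢, hzV⟩ := hzex
    have hzB : ∀ K ∈ 𝒦, ∃ B : QSet X, B ∈ 𝒞 ∧ B ∈ K ∧ z ∈ (B : Set X) := by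
      intro K hK
      have hz : z ∈ G (𝒞 ∩ K) := mem_sInter.mp hz𝒢 _ ⟨K, hK, rfl⟩
      obtain ⟨b, hbT, hbz⟩ := hz
      obtain ⟨B, hB, hbB⟩ := mem_iUnion₂.mp hbT.1
      exact ⟨B, hB.1, hB.2, saturated_mem B.2.2.2 hbB hbz⟩
    set zhat : QSet X := ⟨upSet {z}, upSet_nonempty ⟨z, rfl⟩,
      isCompact_upSet isCompact_singleton, saturated_upSet _⟩ with hzhatdef
    have hclz : {B : QSet X | z ∈ (B : Set X)} = closure {zhat} := by
      ext B
      constructor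
      · intro hzB'
        refine (specLE_uv_iff B zhat).mpr ?_
        intro y hy
        obtain ⟨a, ha, hle⟩ := hy
        rw [mem_singleton_iff] at ha
        subst ha
        exact saturated_mem B.2.2.2 hzB' hle
      · intro hB
        exact (specLE_uv_iff B zhat).mp hB (subset_upSet _ rfl)
    have h𝒟 : 𝒞 ∩ {B : QSet X | z ∈ (B : Set X)} ∈ S := by
      refine ⟨h𝒞closed.inter (hclz ▸ isClosed_closure), inter_subset_left.trans h𝒞U, ?_⟩
      intro K hK
      obtain ⟨B, h1, h2, h3⟩ := hzB K hK
      exact ⟨B, ⟨h1, h3⟩, h2⟩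
    have heq := h𝒞.2 h𝒟 inter_subset_left
    exact hzV (hKV (mem_iInter₂.mpr fun B hB => (heq hB).2))
  have hKne : Kint.Nonempty := by
    by_contra hc
    rw [not_nonempty_iff_eq_empty] at hc
    exact claim ∅ isOpen_empty
      (fun B hB hsub' => B.2.1.ne_empty (subset_empty_iff.mp hsub')) (by rw [hc])
  have hKcpt : IsCompact Kint := by
    apply isCompact_of_finite_subcover
    intro ι W hW hcov
    have h1 : ¬ ∀ B ∈ 𝒞, ¬((B : Set X) ⊆ ⋃ i, W i) :=
      fun hno => claim _ (isOpen_iUnion hW) hno hcov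
    push_neg at h1
    obtain ⟨B, hB𝒞, hBsub⟩ := h1
    obtain ⟨t, ht⟩ := B.2.2.1.elim_finite_subcover W hW hBsub
    exact ⟨t, (biInter_subset_of_mem hB𝒞).trans ht⟩
  have hKsat : Saturated Kint :=
    saturated_of_upper fun a ha b hb =>
      mem_iInter₂.mpr fun B hB => saturated_mem B.2.2.2 (mem_iInter₂.mp ha B hB) hb
  set Khat : QSet X := ⟨Kint, hKne, hKcpt, hKsat⟩ with hKhatdef
  have hKhat𝒞 : Khat ∈ 𝒞 := by
    by_contra hc
    obtain ⟨V, hV, hKV, hbox⟩ := exists_box' h𝒞closed.isOpen_compl hc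
    exact claim V hV (fun B hB hBV => (hbox B hBV) hB) hKV
  have hKhatall : ∀ K ∈ 𝒦, Khat ∈ K := by
    intro K hK
    obtain ⟨B, hB𝒞, hBK⟩ := h𝒞K K hK
    have hle : @specLE (QSet X) (upperVietoris X) B Khat :=
      (specLE_uv_iff B Khat).mpr (biInter_subset_of_mem hB𝒞)
    exact saturated_mem (h𝒦mem K hK).2.2 hBK hle
  exact (h𝒞U hKhat𝒞) (hsub (mem_sInter.mpr hKhatall))

lemma mcs_uv (hwf : WellFiltered X) : @MonotoneConvergenceSpace (QSet X) (upperVietoris X) := by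
  letI tQ : TopologicalSpace (QSet X) := upperVietoris X
  refine ⟨t0_uv, ?_⟩
  intro D hD
  have hdir : ∀ a ∈ D, ∀ b ∈ D, ∃ c ∈ D, (c : Set X) ⊆ (a : Set X) ∧ (c : Set X) ⊆ (b : Set X) := by
    intro a ha b hb
    obtain ⟨c, hc, h1, h2⟩ := hD.2 a ha b hb
    exact ⟨c, hc, (specLE_uv_iff a c).mp h1, (specLE_uv_iff b c).mp h2⟩
  obtain ⟨hne', hcpt', hsat'⟩ := qset_inter hwf hD.1 hdir
  set s : QSet X := ⟨⋂ K ∈ D, (K : Set X), hne', hcpt', hsat'⟩ with hsdef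
  refine ⟨s, subset_antisymm ?_ ?_⟩
  · apply closure_minimal ?_ isClosed_closure
    intro d hd
    exact (specLE_uv_iff d s).mpr (biInter_subset_of_mem hd)
  · apply closure_minimal ?_ isClosed_closure
    intro x hx
    rw [mem_singleton_iff] at hx
    subst hx
    rw [mem_closure_iff]
    intro o ho hso
    obtain ⟨U, hU, hsU, hbox⟩ := exists_box' ho hso
    obtain ⟨d, hdD, hdU⟩ := wf_inter hwf hD.1 hdir hU hsU
    exact ⟨d, hbox d hdU, hdD⟩

end Main
end Stmt16

/-- if `X` is well-filtered then its Smyth power space is well-filtered,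
hence a monotone convergence space; its specialization order is reverse inclusion, and
`Q(X)` is a dcpo in which directed suprema are filtered intersections. -/
theorem stmt16 {X : Type u} [TopologicalSpace X] (h : WellFiltered X) :
    @WellFiltered (QSet X) (upperVietoris X) ∧
      @MonotoneConvergenceSpace (QSet X) (upperVietoris X) ∧
      (∀ K L : QSet X, @specLE (QSet X) (upperVietoris X) K L ↔ revIncl K L) ∧
      (∀ D : Set (QSet X), DirectedSubset (revIncl (X := X)) D →
        ∃ s : QSet X, (s : Set X) = (⋂ K ∈ D, (K : Set X)) ∧
          IsSupWrt (revIncl (X := X)) D s) := by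
  refine ⟨Stmt16.wf_uv h, Stmt16.mcs_uv h, fun K L => Stmt16.specLE_uv_iff K L, ?_⟩
  intro D hD
  have hdir : ∀ a ∈ D, ∀ b ∈ D, ∃ c ∈ D,
      (c : Set X) ⊆ (a : Set X) ∧ (c : Set X) ⊆ (b : Set X) := fun a ha b hb => hD.2 a ha b hb
  obtain ⟨hne', hcpt', hsat'⟩ := Stmt16.qset_inter h hD.1 hdir
  refine ⟨⟨⋂ K ∈ D, (K : Set X), hne', hcpt', hsat'⟩, rfl, ?_, ?_⟩
  · exact fun d hd => Set.biInter_subset_of_mem hd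
  · exact fun t ht => Set.subset_iInter₂ fun d hd => ht d hd
end

section
/- If X is a locally compact sober space, then the upper Vietoris topology on Q(X) coincides with the Scott topology on Q(X) ordered by reverse inclusion. -/
open Set TopologicalSpace

universe u

section AuxLemmas

variable {X : Type u} [TopologicalSpace X]

/-- The saturation of a set: the intersection of all open sets containing it. -/
def satOf (C : Set X) : Set X := ⋂₀ {U : Set X | IsOpen U ∧ C ⊆ U}

lemma subset_satOf (C : Set X) : C ⊆ satOf C :=
  fun _ hx => fun _ hU => hU.2 hx

lemma satOf_subset {C U : Set X} (hU : IsOpen U) (h : C ⊆ U) : satOf C ⊆ U :=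
  sInter_subset_of_mem ⟨hU, h⟩

lemma satOf_subset_saturated {C L : Set X} (hL : Saturated L) (h : C ⊆ L) :
    satOf C ⊆ L := by
  rw [hL]
  exact fun x hx W hW => hx W ⟨hW.1, h.trans hW.2⟩

lemma saturated_satOf (C : Set X) : Saturated (satOf C) := by
  apply Subset.antisymm
  · exact fun x hx W hW => hW.2 hx
  · exact fun x hx W hW => hx W ⟨hW.1, satOf_subset hW.1 hW.2⟩

lemma isCompact_satOf {C : Set X} (hC : IsCompact C) : IsCompact (satOf C) := by
  apply isCompact_of_finite_subcover
  intro ι U hU hcover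
  obtain ⟨t, ht⟩ := hC.elim_finite_subcover U hU ((subset_satOf C).trans hcover)
  exact ⟨t, satOf_subset (isOpen_biUnion fun i _ => hU i) ht⟩

lemma exists_open_of_not_mem {K : Set X} (hK : Saturated K) {x : X} (hx : x ∉ K) :
    ∃ U : Set X, IsOpen U ∧ K ⊆ U ∧ x ∉ U := by
  by_contra h
  push_neg at h
  apply hx
  rw [hK]
  exact fun W hW => h W hW.1 hW.2

/-- A finite subfamily of a nonempty chain has a lower bound in the chain. -/
lemma chain_finset_lb {c : Set (Set X)} (hc : IsChain (· ⊆ ·) c) (hne : c.Nonempty)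
    (t : Finset (Set X)) (ht : ↑t ⊆ c) : ∃ A ∈ c, ∀ B ∈ t, A ⊆ B := by
  classical
  induction t using Finset.induction with
  | empty => exact ⟨hne.choose, hne.choose_spec, by simp⟩
  | @insert B t hB ih =>
    obtain ⟨A, hA, hAt⟩ := ih (fun x hx => ht (Finset.mem_coe.2 (Finset.mem_insert_of_mem hx)))
    have hBc : B ∈ c := ht (Finset.mem_coe.2 (Finset.mem_insert_self B t))
    rcases eq_or_ne A B with rfl | hAB
    · exact ⟨A, hA, fun C hC => by
        rcases Finset.mem_insert.1 hC with rfl | hC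
        · exact Subset.rfl
        · exact hAt C hC⟩
    rcases hc hA hBc hAB with h | h
    · exact ⟨A, hA, fun C hC => by
        rcases Finset.mem_insert.1 hC with rfl | hC
        · exact h
        · exact hAt C hC⟩
    · exact ⟨B, hBc, fun C hC => by
        rcases Finset.mem_insert.1 hC with rfl | hC
        · exact Subset.rfl
        · exact h.trans (hAt C hC)⟩

/-- Sober spaces are well-filtered: the key Hofmann–Mislove style lemma. -/
lemma sober_wellFiltered (hs : SoberSpace X) (𝒦 : Set (Set X)) (hne : 𝒦.Nonempty)
    (hQ : ∀ K ∈ 𝒦, K.Nonempty ∧ IsCompact K ∧ Saturated K)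
    (hdir : ∀ K₁ ∈ 𝒦, ∀ K₂ ∈ 𝒦, ∃ K₃ ∈ 𝒦, K₃ ⊆ K₁ ∧ K₃ ⊆ K₂)
    (U : Set X) (hU : IsOpen U) (hsub : ⋂₀ 𝒦 ⊆ U) : ∃ K ∈ 𝒦, K ⊆ U := by
  classical
  by_contra hcon
  push_neg at hcon
  -- the collection of closed subsets of `Uᶜ` meeting every member of `𝒦`
  set P : Set (Set X) := {A | IsClosed A ∧ A ⊆ Uᶜ ∧ ∀ K ∈ 𝒦, (A ∩ K).Nonempty} with hP
  have hUc : Uᶜ ∈ P := by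
    refine ⟨hU.isClosed_compl, Subset.rfl, fun K hK => ?_⟩
    obtain ⟨x, hx, hxU⟩ := not_subset.1 (hcon K hK)
    exact ⟨x, hxU, hx⟩
  -- Zorn's lemma gives a minimal element of `P`
  obtain ⟨A, -, hAP, hAmin⟩ := zorn_superset_nonempty P (fun c hcP hchain hcne => by
    refine ⟨⋂₀ c, ⟨isClosed_sInter fun A hA => (hcP hA).1, ?_, ?_⟩,
      fun s hs => sInter_subset_of_mem hs⟩
    · exact (sInter_subset_of_mem hcne.choose_spec).trans (hcP hcne.choose_spec).2.1
    · intro K hK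
      obtain ⟨hKne, hKc, -⟩ := hQ K hK
      have := hKc.inter_iInter_nonempty (fun A : c => (A : Set X))
        (fun A => (hcP A.2).1) (fun u => by
          obtain ⟨A, hAc, hAu⟩ := chain_finset_lb hchain hcne (u.image Subtype.val)
            (by intro x hx; obtain ⟨y, -, rfl⟩ := Finset.mem_image.1 (Finset.mem_coe.1 hx); exact y.2)
          obtain ⟨x, hx1, hx2⟩ := (hcP hAc).2.2 K hK
          refine ⟨x, hx2, mem_iInter₂.2 fun i hi => ?_⟩
          exact hAu i (Finset.mem_image.2 ⟨i, hi, rfl⟩) hx1)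
      obtain ⟨x, hx1, hx2⟩ := this
      exact ⟨x, mem_sInter.2 fun A hA => mem_iInter.1 hx2 ⟨A, hA⟩, hx1⟩) Uᶜ hUc
  obtain ⟨hAcl, hAU, hAmeets⟩ := hAP
  -- `A` is irreducible
  have hAne : A.Nonempty := by
    obtain ⟨K, hK⟩ := hne
    obtain ⟨x, hx, -⟩ := hAmeets K hK
    exact ⟨x, hx⟩
  have hirr : IsIrreducible A := by
    refine ⟨hAne, fun u v hu hv hAu hAv => ?_⟩
    by_contra hcon2
    have hsplit : A ⊆ (A ∩ uᶜ) ∪ (A ∩ vᶜ) := by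
      intro x hx
      by_cases hxu : x ∈ u
      · by_cases hxv : x ∈ v
        · exact absurd ⟨x, hx, hxu, hxv⟩ hcon2
        · exact Or.inr ⟨hx, hxv⟩
      · exact Or.inl ⟨hx, hxu⟩
    have key : ∀ w : Set X, IsOpen w → (A ∩ w).Nonempty → ∃ K ∈ 𝒦, (A ∩ wᶜ) ∩ K = ∅ := by
      intro w hw hAw
      by_contra h
      push_neg at h
      have hmem : A ∩ wᶜ ∈ P := ⟨hAcl.inter hw.isClosed_compl,
        (inter_subset_left).trans hAU,
        fun K hK => h K hK⟩
      have heq : A ∩ wᶜ = A := Subset.antisymm inter_subset_left (hAmin hmem inter_subset_left)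
      obtain ⟨x, hx1, hx2⟩ := hAw
      have hx' : x ∈ A ∩ wᶜ := by rw [heq]; exact hx1
      exact hx'.2 hx2
    obtain ⟨K₁, hK₁, hK₁e⟩ := key u hu hAu
    obtain ⟨K₂, hK₂, hK₂e⟩ := key v hv hAv
    obtain ⟨K₃, hK₃, h31, h32⟩ := hdir K₁ hK₁ K₂ hK₂
    obtain ⟨x, hxA, hxK⟩ := hAmeets K₃ hK₃
    rcases hsplit hxA with h | h
    · have hx' : x ∈ A ∩ uᶜ ∩ K₁ := ⟨h, h31 hxK⟩
      rw [hK₁e] at hx'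
      exact hx'
    · have hx' : x ∈ A ∩ vᶜ ∩ K₂ := ⟨h, h32 hxK⟩
      rw [hK₂e] at hx'
      exact hx'
  obtain ⟨x, hxeq, -⟩ := hs.2 A hirr hAcl
  have hxA : x ∈ A := hxeq ▸ subset_closure rfl
  -- `x` belongs to every `K ∈ 𝒦`
  have hxall : x ∈ ⋂₀ 𝒦 := by
    intro K hK
    obtain ⟨-, -, hKsat⟩ := hQ K hK
    by_contra hxK
    obtain ⟨W, hW, hKW, hxW⟩ := exists_open_of_not_mem hKsat hxK
    obtain ⟨y, hyA, hyK⟩ := hAmeets K hK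
    have hycl : y ∈ closure ({x} : Set X) := hxeq ▸ hyA
    have : ({x} : Set X) ∩ W |>.Nonempty :=
      (mem_closure_iff.1 hycl) W hW (hKW hyK) |>.imp fun z hz => ⟨hz.2, hz.1⟩
    obtain ⟨z, hz1, hz2⟩ := this
    exact hxW (hz1 ▸ hz2)
  exact hAU hxA (hsub hxall)

/-- In a sober space, the filtered intersection of nonempty compact saturated sets is
nonempty, compact, and saturated. -/
lemma sInter_mem_Q (hs : SoberSpace X) (𝒦 : Set (Set X)) (hne : 𝒦.Nonempty)
    (hQ : ∀ K ∈ 𝒦, K.Nonempty ∧ IsCompact K ∧ Saturated K)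
    (hdir : ∀ K₁ ∈ 𝒦, ∀ K₂ ∈ 𝒦, ∃ K₃ ∈ 𝒦, K₃ ⊆ K₁ ∧ K₃ ⊆ K₂) :
    (⋂₀ 𝒦).Nonempty ∧ IsCompact (⋂₀ 𝒦) ∧ Saturated (⋂₀ 𝒦) := by
  refine ⟨?_, ?_, ?_⟩
  · by_contra h
    rw [not_nonempty_iff_eq_empty] at h
    obtain ⟨K, hK, hKsub⟩ := sober_wellFiltered hs 𝒦 hne hQ hdir ∅ isOpen_empty
      (h ▸ Subset.rfl)
    exact (hQ K hK).1.ne_empty (subset_empty_iff.1 hKsub)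
  · apply isCompact_of_finite_subcover
    intro ι V hV hcover
    obtain ⟨K, hK, hKsub⟩ := sober_wellFiltered hs 𝒦 hne hQ hdir (⋃ i, V i)
      (isOpen_iUnion hV) hcover
    obtain ⟨t, ht⟩ := (hQ K hK).2.1.elim_finite_subcover V hV hKsub
    exact ⟨t, (sInter_subset_of_mem hK).trans ht⟩
  · apply Subset.antisymm
    · exact fun x hx W hW => hW.2 hx
    · intro x hx K hK
      obtain ⟨-, -, hKsat⟩ := hQ K hK
      rw [hKsat]
      intro W hW
      exact hx W ⟨hW.1, (sInter_subset_of_mem hK).trans hW.2⟩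

end AuxLemmas

/-- for a locally compact sober space `X`, the upper Vietoris topology on
`Q(X)` coincides with the Scott topology of `(Q(X), ⊇)`. -/
theorem stmt17 {X : Type u} [TopologicalSpace X] [LocallyCompactSpace X]
    (hs : SoberSpace X) :
    upperVietoris X = scottTop (revIncl (X := X)) := by
  apply le_antisymm
  · -- Every Scott open set is upper Vietoris open
    intro 𝒰 h𝒰
    obtain ⟨hup, hd⟩ := h𝒰
    -- 𝒰 is a union of basic opens ☐(interior L) for suitable L
    have key : ∀ K : QSet X, K ∈ 𝒰 → ∃ V : Set (QSet X),
        (∃ U : Set X, IsOpen U ∧ V = {K' : QSet X | (K' : Set X) ⊆ U}) ∧ K ∈ V ∧ V ⊆ 𝒰 := by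
      intro K hK
      set D : Set (QSet X) := {L : QSet X | (K : Set X) ⊆ interior (L : Set X)} with hD
      -- `D` is directed
      have hDdir : DirectedSubset revIncl D := by
        constructor
        · obtain ⟨C, hCc, hCi, -⟩ := exists_compact_between K.2.2.1 isOpen_univ
            (subset_univ _)
          have hCne : C.Nonempty := K.2.1.mono (hCi.trans interior_subset)
          exact ⟨⟨satOf C, hCne.mono (subset_satOf C), isCompact_satOf hCc,
            saturated_satOf C⟩, hCi.trans (interior_mono (subset_satOf C))⟩
        · intro L₁ hL₁ L₂ hL₂
          have hW : IsOpen (interior (L₁ : Set X) ∩ interior (L₂ : Set X)) :=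
            isOpen_interior.inter isOpen_interior
          obtain ⟨C, hCc, hCi, hCW⟩ := exists_compact_between K.2.2.1 hW
            (subset_inter hL₁ hL₂)
          have hCne : C.Nonempty := K.2.1.mono (hCi.trans interior_subset)
          refine ⟨⟨satOf C, hCne.mono (subset_satOf C), isCompact_satOf hCc,
            saturated_satOf C⟩, hCi.trans (interior_mono (subset_satOf C)), ?_, ?_⟩
          · exact satOf_subset_saturated L₁.2.2.2
              (hCW.trans ((inter_subset_left).trans interior_subset))
          · exact satOf_subset_saturated L₂.2.2.2
              (hCW.trans ((inter_subset_right).trans interior_subset))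
      -- `K` is the supremum of `D`
      have hKsup : IsSupWrt revIncl D K := by
        constructor
        · exact fun L hL => hL.trans interior_subset
        · intro t ht
          intro x hx
          by_contra hxK
          obtain ⟨V, hV, hKV, hxV⟩ := exists_open_of_not_mem K.2.2.2 hxK
          obtain ⟨C, hCc, hCi, hCV⟩ := exists_compact_between K.2.2.1 hV hKV
          have hCne : C.Nonempty := K.2.1.mono (hCi.trans interior_subset)
          have hmem : (⟨satOf C, hCne.mono (subset_satOf C), isCompact_satOf hCc,
              saturated_satOf C⟩ : QSet X) ∈ D :=
            hCi.trans (interior_mono (subset_satOf C))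
          exact hxV (satOf_subset hV hCV (ht _ hmem hx))
      obtain ⟨L, hLD, hLU⟩ := hd D hDdir K hKsup hK
      refine ⟨{K' : QSet X | (K' : Set X) ⊆ interior (L : Set X)},
        ⟨interior (L : Set X), isOpen_interior, rfl⟩, hLD, ?_⟩
      intro K' hK'
      exact hup hLU (hK'.trans interior_subset)
    have : 𝒰 = ⋃₀ {V : Set (QSet X) |
        (∃ U : Set X, IsOpen U ∧ V = {K' : QSet X | (K' : Set X) ⊆ U}) ∧ V ⊆ 𝒰} := by
      apply Subset.antisymm
      · intro K hK
        obtain ⟨V, hVb, hKV, hV𝒰⟩ := key K hK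
        exact ⟨V, ⟨hVb, hV𝒰⟩, hKV⟩
      · rintro K ⟨V, ⟨-, hV𝒰⟩, hKV⟩
        exact hV𝒰 hKV
    rw [this]
    exact TopologicalSpace.GenerateOpen.sUnion _
      (fun V hV => TopologicalSpace.GenerateOpen.basic V hV.1)
  · -- Every upper Vietoris open set is Scott open; it suffices for the basic opens
    apply le_generateFrom
    rintro s ⟨U, hU, rfl⟩
    refine ⟨fun K hK L hKL => hKL.trans hK, ?_⟩
    intro D hDdir t ht htU
    set 𝒦 : Set (Set X) := Subtype.val '' D with h𝒦
    have hne : 𝒦.Nonempty := hDdir.1.image _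
    have hQ : ∀ K ∈ 𝒦, K.Nonempty ∧ IsCompact K ∧ Saturated K := by
      rintro K ⟨K', -, rfl⟩; exact K'.2
    have hdir : ∀ K₁ ∈ 𝒦, ∀ K₂ ∈ 𝒦, ∃ K₃ ∈ 𝒦, K₃ ⊆ K₁ ∧ K₃ ⊆ K₂ := by
      rintro K₁ ⟨L₁, hL₁, rfl⟩ K₂ ⟨L₂, hL₂, rfl⟩
      obtain ⟨L₃, hL₃, h1, h2⟩ := hDdir.2 L₁ hL₁ L₂ hL₂
      exact ⟨L₃, ⟨L₃, hL₃, rfl⟩, h1, h2⟩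
    obtain ⟨hine, hic, hisat⟩ := sInter_mem_Q hs 𝒦 hne hQ hdir
    -- `⋂₀ 𝒦` as an element of `QSet X` is an upper bound, so `⋂₀ 𝒦 ⊆ t`
    have hub : IsUBWrt revIncl D ⟨⋂₀ 𝒦, hine, hic, hisat⟩ :=
      fun d hd => sInter_subset_of_mem ⟨d, hd, rfl⟩
    have hsub : ⋂₀ 𝒦 ⊆ U := (ht.2 _ hub).trans htU
    obtain ⟨K, hK, hKU⟩ := sober_wellFiltered hs 𝒦 hne hQ hdir U hU hsub
    obtain ⟨L, hL, rfl⟩ := hK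
    exact ⟨L, hL, hKU⟩
end

section
/- Let X be a core compactly generated space. Then X is core compact if and only if for every core compactly generated space Y, the product topology on X × Y coincides with the core compactly generated topology of X × Y. -/
open Set TopologicalSpace

universe u

section WayBelowLemmas

variable {Z : Type u} [TopologicalSpace Z]

lemma ccgOpen_of_isOpen {V : Set Z} (hV : IsOpen V) : ccgOpen Z V :=
  fun _C _tC _hc _ρ hρ => hρ.isOpen_preimage V hV

lemma wayBelow_mono_left {V' V U : Set Z} (h : V' ⊆ V) (hVU : WayBelow V U) : WayBelow V' U := by
  intro S hS hc
  obtain ⟨F, h1, h2⟩ := hVU S hS hc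
  exact ⟨F, h1, h.trans h2⟩

lemma wayBelow_mono_right {V U U' : Set Z} (hVU : WayBelow V U) (h : U ⊆ U') : WayBelow V U' :=
  fun S hS hc => hVU S hS (h.trans hc)

lemma wayBelow_subset {V U : Set Z} (hVU : WayBelow V U) (hU : IsOpen U) : V ⊆ U := by
  obtain ⟨F, h1, h2⟩ := hVU {U} (by rintro W rfl; exact hU) (by simp)
  refine h2.trans (sUnion_subset fun W hW => ?_)
  have := h1 hW
  simp only [mem_singleton_iff] at this
  subst this; exact subset_rfl

lemma wayBelow_empty (U : Set Z) : WayBelow (∅ : Set Z) U :=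
  fun _S _hS _hc => ⟨∅, by simp, by simp⟩

lemma wayBelow_union {V₁ V₂ U : Set Z} (h1 : WayBelow V₁ U) (h2 : WayBelow V₂ U) :
    WayBelow (V₁ ∪ V₂) U := by
  classical
  intro S hS hc
  obtain ⟨F₁, hF₁, hV₁⟩ := h1 S hS hc
  obtain ⟨F₂, hF₂, hV₂⟩ := h2 S hS hc
  refine ⟨F₁ ∪ F₂, ?_, ?_⟩
  · intro W hW
    rcases Finset.mem_union.1 (by exact_mod_cast hW) with h | h
    · exact hF₁ h
    · exact hF₂ h
  · refine union_subset (hV₁.trans (sUnion_subset_sUnion ?_)) (hV₂.trans (sUnion_subset_sUnion ?_)) <;>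
      intro W hW <;> simp only [Finset.coe_union, mem_union]
    · exact Or.inl hW
    · exact Or.inr hW

lemma wayBelow_biUnion {ι : Type*} (F : Finset ι) (f : ι → Set Z) {U : Set Z}
    (h : ∀ a ∈ F, WayBelow (f a) U) : WayBelow (⋃ a ∈ F, f a) U := by
  classical
  induction F using Finset.induction_on with
  | empty => simpa using wayBelow_empty U
  | insert a F hnot ih =>
    rw [Finset.set_biUnion_insert]
    exact wayBelow_union (h a (Finset.mem_insert_self a F))
      (ih fun b hb => h b (Finset.mem_insert_of_mem hb))

lemma wayBelow_interpolate (hcc : CoreCompact Z) {V U : Set Z} (hU : IsOpen U)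
    (hVU : WayBelow V U) : ∃ W, IsOpen W ∧ WayBelow V W ∧ WayBelow W U := by
  classical
  set S₀ : Set (Set Z) := {V' | IsOpen V' ∧ ∃ W, IsOpen W ∧ WayBelow V' W ∧ WayBelow W U} with hS₀
  have hcover : U ⊆ ⋃₀ S₀ := by
    intro x hx
    obtain ⟨W, hW, hxW, hWU⟩ := hcc U hU x hx
    obtain ⟨V', hV', hxV', hV'W⟩ := hcc W hW x hxW
    exact ⟨V', ⟨hV', W, hW, hV'W, hWU⟩, hxV'⟩
  obtain ⟨F, hFS, hVF⟩ := hVU S₀ (fun W hW => hW.1) hcover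
  let Wf : Set Z → Set Z := fun V' => if h : V' ∈ S₀ then h.2.choose else ∅
  have hWf : ∀ V' ∈ S₀, IsOpen (Wf V') ∧ WayBelow V' (Wf V') ∧ WayBelow (Wf V') U := by
    intro V' h
    simp only [Wf, dif_pos h]
    exact h.2.choose_spec
  refine ⟨⋃ V' ∈ F, Wf V', ?_, ?_, ?_⟩
  · exact isOpen_biUnion fun V' hV' => (hWf V' (hFS hV')).1
  · refine wayBelow_mono_left hVF ?_
    rw [sUnion_eq_biUnion]
    refine wayBelow_biUnion F id fun V' hV' => ?_
    exact wayBelow_mono_right (hWf V' (hFS hV')).2.1 (subset_biUnion_of_mem hV')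
  · exact wayBelow_biUnion F Wf fun V' hV' => (hWf V' (hFS hV')).2.2

end WayBelowLemmas
section Tube

variable {A : Type u} {B : Type u} [TopologicalSpace A] [TopologicalSpace B]

lemma half_tube {G : Set (A × B)} (hG : IsOpen G) {V'' V' : Set A} (h2 : WayBelow V'' V')
    {c₀ : B} (hsub : ∀ x ∈ V', (x, c₀) ∈ G) :
    ∃ Bo, IsOpen Bo ∧ c₀ ∈ Bo ∧ ∀ x ∈ V'', ∀ c ∈ Bo, (x, c) ∈ G := by
  classical
  set T : Set (Set A) :=
    {U | IsOpen U ∧ ∃ Bo, IsOpen Bo ∧ c₀ ∈ Bo ∧ ∀ x ∈ U, ∀ c ∈ Bo, (x, c) ∈ G} with hT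
  have hcover : V' ⊆ ⋃₀ T := by
    intro x hx
    obtain ⟨u, v, hu, hv, hxu, hcv, huv⟩ := isOpen_prod_iff.1 hG x c₀ (hsub x hx)
    exact ⟨u, ⟨hu, v, hv, hcv, fun x' hx' c hc => huv ⟨hx', hc⟩⟩, hxu⟩
  obtain ⟨F, hFT, hVF⟩ := h2 T (fun U hU => hU.1) hcover
  let Bf : Set A → Set B := fun U => if h : U ∈ T then h.2.choose else univ
  have hBf : ∀ U ∈ T, IsOpen (Bf U) ∧ c₀ ∈ Bf U ∧ ∀ x ∈ U, ∀ c ∈ Bf U, (x, c) ∈ G := by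
    intro U h
    simp only [Bf, dif_pos h]
    exact h.2.choose_spec
  refine ⟨⋂ U ∈ F, Bf U, ?_, ?_, ?_⟩
  · exact isOpen_biInter_finset fun U hU => (hBf U (hFT hU)).1
  · exact mem_biInter fun U hU => (hBf U (hFT hU)).2.1
  · intro x hx c hc
    obtain ⟨U, hUF, hxU⟩ := hVF hx
    have hUF' : U ∈ F := hUF
    exact (hBf U (hFT hUF')).2.2 x hxU c (mem_iInter₂.1 hc U hUF')

lemma wayBelow_prod {Ao A₀ : Set A} {Bo B₀ : Set B} (hA : WayBelow Ao A₀) (hB : WayBelow Bo B₀) :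
    WayBelow (Ao ×ˢ Bo) (A₀ ×ˢ B₀) := by
  classical
  intro S hS hc
  set T' : Set (Set B) :=
    {V | IsOpen V ∧ ∃ F : Finset (Set (A × B)), ↑F ⊆ S ∧
      ∀ x ∈ Ao, ∀ c ∈ V, (x, c) ∈ ⋃₀ (F : Set (Set (A × B)))} with hT'
  have hcoverB : B₀ ⊆ ⋃₀ T' := by
    intro c hcB
    set Tc : Set (Set A) :=
      {U | IsOpen U ∧ ∃ V, IsOpen V ∧ c ∈ V ∧ ∃ W ∈ S, U ×ˢ V ⊆ W} with hTc
    have hcoverA : A₀ ⊆ ⋃₀ Tc := by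
      intro x hx
      obtain ⟨W, hWS, hxW⟩ := hc (show (x, c) ∈ A₀ ×ˢ B₀ from ⟨hx, hcB⟩)
      obtain ⟨u, v, hu, hv, hxu, hcv, huv⟩ := isOpen_prod_iff.1 (hS W hWS) x c hxW
      exact ⟨u, ⟨hu, v, hv, hcv, W, hWS, huv⟩, hxu⟩
    obtain ⟨Fc, hFcT, hAFc⟩ := hA Tc (fun U hU => hU.1) hcoverA
    let Vf : Set A → Set B := fun U => if h : U ∈ Tc then h.2.choose else univ
    let Wf : Set A → Set (A × B) := fun U => if h : U ∈ Tc then h.2.choose_spec.2.2.choose else ∅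
    have hVW : ∀ U ∈ Tc, IsOpen (Vf U) ∧ c ∈ Vf U ∧ Wf U ∈ S ∧ U ×ˢ Vf U ⊆ Wf U := by
      intro U h
      simp only [Vf, Wf, dif_pos h]
      exact ⟨h.2.choose_spec.1, h.2.choose_spec.2.1, h.2.choose_spec.2.2.choose_spec.1,
        h.2.choose_spec.2.2.choose_spec.2⟩
    refine ⟨⋂ U ∈ Fc, Vf U, ⟨?_, Fc.image Wf, ?_, ?_⟩, ?_⟩
    · exact isOpen_biInter_finset fun U hU => (hVW U (hFcT hU)).1
    · intro W hW
      simp only [Finset.coe_image, mem_image, Finset.mem_coe] at hW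
      obtain ⟨U, hU, rfl⟩ := hW
      exact (hVW U (hFcT hU)).2.2.1
    · intro x hx c' hc'
      obtain ⟨U, hUF, hxU⟩ := hAFc hx
      have hUF' : U ∈ Fc := hUF
      refine ⟨Wf U, by simp only [Finset.coe_image]; exact mem_image_of_mem _ hUF', ?_⟩
      exact (hVW U (hFcT hUF')).2.2.2 ⟨hxU, mem_iInter₂.1 hc' U hUF'⟩
    · exact mem_biInter fun U hU => (hVW U (hFcT hU)).2.1
  obtain ⟨E, hET, hBE⟩ := hB T' (fun V hV => hV.1) hcoverB
  let Ff : Set B → Finset (Set (A × B)) := fun V => if h : V ∈ T' then h.2.choose else ∅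
  have hFf : ∀ V ∈ T', ↑(Ff V) ⊆ S ∧
      ∀ x ∈ Ao, ∀ c ∈ V, (x, c) ∈ ⋃₀ ((Ff V : Set (Set (A × B)))) := by
    intro V h
    simp only [Ff, dif_pos h]
    exact h.2.choose_spec
  refine ⟨E.biUnion Ff, ?_, ?_⟩
  · intro W hW
    simp only [Finset.coe_biUnion, mem_iUnion, Finset.mem_coe] at hW
    obtain ⟨V, hV, hWV⟩ := hW
    exact (hFf V (hET hV)).1 hWV
  · rintro ⟨x, c⟩ ⟨hx, hcBo⟩
    obtain ⟨V, hVE, hcV⟩ := hBE hcBo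
    have hVE' : V ∈ E := hVE
    obtain ⟨W, hW, hxc⟩ := (hFf V (hET hVE')).2 x hx c hcV
    refine ⟨W, ?_, hxc⟩
    simp only [Finset.coe_biUnion, mem_iUnion, Finset.mem_coe]
    exact ⟨V, hVE', hW⟩

lemma coreCompact_prod (hA : CoreCompact A) (hB : CoreCompact B) : CoreCompact (A × B) := by
  rintro G hG ⟨x₀, c₀⟩ hx
  obtain ⟨u, v, hu, hv, hxu, hcv, huv⟩ := isOpen_prod_iff.1 hG x₀ c₀ hx
  obtain ⟨Ao, hAo, hxAo, hAou⟩ := hA u hu x₀ hxu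
  obtain ⟨Bo, hBo, hcBo, hBov⟩ := hB v hv c₀ hcv
  exact ⟨Ao ×ˢ Bo, hAo.prod hBo, ⟨hxAo, hcBo⟩,
    wayBelow_mono_right (wayBelow_prod hAou hBov) huv⟩

end Tube

lemma coreCompact_punit : CoreCompact (PUnit.{u + 1}) := by
  intro U hU x hx
  refine ⟨U, hU, hx, fun S hS hc => ?_⟩
  obtain ⟨W, hWS, hxW⟩ := hc hx
  refine ⟨{W}, by simpa using hWS, fun y hy => ?_⟩
  have : y = x := by cases y; cases x; rfl
  subst this
  simpa using hxW
section ScottAux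

variable {α : Type u}

lemma isSupWrt_powerset {D : Set (Set α)} {s : Set α} (h : IsSupWrt (· ⊆ ·) D s) :
    s = ⋃₀ D :=
  subset_antisymm (h.2 _ fun d hd => subset_sUnion_of_mem hd) (sUnion_subset h.1)

lemma directed_bound_finset {β : Type*} {le : β → β → Prop}
    (htr : ∀ a b c, le a b → le b c → le a c) {D : Set β} (hD : DirectedSubset le D)
    {γ : Type*} (F : Finset γ) (P : γ → β → Prop) (h : ∀ a ∈ F, ∃ d ∈ D, P a d) :
    ∃ d' ∈ D, ∀ a ∈ F, ∃ d ∈ D, P a d ∧ le d d' := by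
  classical
  induction F using Finset.induction_on with
  | empty =>
    obtain ⟨d, hd⟩ := hD.1
    exact ⟨d, hd, by simp⟩
  | insert a F hnot ih =>
    obtain ⟨d₁, hd₁, hF⟩ := ih fun b hb => h b (Finset.mem_insert_of_mem hb)
    obtain ⟨da, hda, hPa⟩ := h a (Finset.mem_insert_self a F)
    obtain ⟨d₂, hd₂, h1, h2⟩ := hD.2 d₁ hd₁ da hda
    refine ⟨d₂, hd₂, fun b hb => ?_⟩
    rcases Finset.mem_insert.1 hb with rfl | hb
    · exact ⟨da, hda, hPa, h2⟩
    · obtain ⟨d, hd, hPd, hled⟩ := hF b hb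
      exact ⟨d, hd, hPd, htr _ _ _ hled h1⟩

lemma finite_subset_directed {D : Set (Set α)} (hD : DirectedSubset (· ⊆ ·) D)
    {F : Set α} (hF : F.Finite) (h : F ⊆ ⋃₀ D) : ∃ d ∈ D, F ⊆ d := by
  obtain ⟨d', hd', hall⟩ := directed_bound_finset (fun a b c hab hbc => hab.trans hbc) hD
    hF.toFinset (fun x d => x ∈ d) (fun x hx => h (hF.mem_toFinset.1 hx))
  refine ⟨d', hd', fun x hx => ?_⟩
  obtain ⟨d, _, hxd, hdd'⟩ := hall x (hF.mem_toFinset.2 hx)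
  exact hdd' hxd

lemma coreCompact_powerset : @CoreCompact (Set α) (scottTop (· ⊆ ·)) := by
  intro U hU A hA
  have hU' : ScottOpenWrt (· ⊆ ·) U := hU
  have hdir : DirectedSubset (· ⊆ ·) {F : Set α | F.Finite ∧ F ⊆ A} :=
    ⟨⟨∅, finite_empty, empty_subset A⟩, fun a ha b hb =>
      ⟨a ∪ b, ⟨ha.1.union hb.1, union_subset ha.2 hb.2⟩, subset_union_left, subset_union_right⟩⟩
  have hsup : IsSupWrt (· ⊆ ·) {F : Set α | F.Finite ∧ F ⊆ A} A := by
    refine ⟨fun d hd => hd.2, fun t ht => fun x hx => ?_⟩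
    exact ht {x} ⟨finite_singleton x, singleton_subset_iff.2 hx⟩ rfl
  obtain ⟨F, hFD, hFU⟩ := hU'.2 _ hdir A hsup hA
  refine ⟨{B | F ⊆ B}, ?_, hFD.2, ?_⟩
  · show ScottOpenWrt (· ⊆ ·) {B | F ⊆ B}
    refine ⟨fun B hB B' hBB' => hB.trans hBB', fun D hD s hs hsF => ?_⟩
    obtain ⟨d, hd, hFd⟩ := finite_subset_directed hD hFD.1
      (by rw [← isSupWrt_powerset hs]; exact hsF)
    exact ⟨d, hd, hFd⟩
  · intro S hS hc
    obtain ⟨W, hWS, hFW⟩ := hc hFU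
    have hW : ScottOpenWrt (· ⊆ ·) W := hS W hWS
    refine ⟨{W}, by simpa using hWS, fun B hB => ?_⟩
    exact ⟨W, by simp, hW.1 hFW hB⟩

end ScottAux

section Idem

lemma continuous_into_ccg {C Z : Type u} (tC : TopologicalSpace C) (t : TopologicalSpace Z)
    (hc : @CoreCompact C tC) (rho : C → Z) (hrho : @Continuous C Z tC t rho) :
    @Continuous C Z tC (@ccgTopology Z t) rho := by
  refine @Continuous.mk C Z tC (@ccgTopology Z t) rho (fun O hO => ?_)
  have hO2 : @ccgOpen Z t O := hO
  exact hO2 C tC hc rho hrho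

lemma ccg_ccg (Z : Type u) (t : TopologicalSpace Z) : @CCGenerated Z (@ccgTopology Z t) := by
  apply TopologicalSpace.ext_iff.2
  intro V
  constructor
  · intro h0 C tC hc rho hrho
    have h : @ccgOpen Z (@ccgTopology Z t) V := h0
    exact h C tC hc rho (continuous_into_ccg tC t hc rho hrho)
  · intro h0
    have h : @IsOpen Z (@ccgTopology Z t) V := h0
    show @ccgOpen Z (@ccgTopology Z t) V
    intro C tC hc rho hrho
    exact @Continuous.isOpen_preimage C Z tC (@ccgTopology Z t) rho hrho V h

end Idem
section Theta

variable {X : Type u} [tX : TopologicalSpace X]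

lemma isSupWrt_opens {D : Set {U : Set X // IsOpen U}} {s : {U : Set X // IsOpen U}}
    (h : IsSupWrt (fun a b => a.1 ⊆ b.1) D s) :
    s.1 = ⋃ d ∈ D, (d : {U : Set X // IsOpen U}).1 :=
  subset_antisymm
    (h.2 ⟨⋃ d ∈ D, (d : {U : Set X // IsOpen U}).1, isOpen_biUnion fun d _ => d.2⟩
      fun d hd => subset_biUnion_of_mem hd)
    (iUnion₂_subset fun d hd => h.1 d hd)

lemma theta_continuous (W₀ : Set X) (hW₀ : IsOpen W₀) (S : Set (Set X))
    (hS : ∀ V ∈ S, IsOpen V) :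
    @Continuous (Set (Set X)) {U : Set X // IsOpen U} (scottTop (· ⊆ ·))
      (scottTop (fun a b => a.1 ⊆ b.1))
      (fun F => ⟨W₀ ∪ ⋃₀ (F ∩ S), hW₀.union (isOpen_sUnion fun V hV => hS V hV.2)⟩) := by
  set Θ : Set (Set X) → {U : Set X // IsOpen U} :=
    fun F => ⟨W₀ ∪ ⋃₀ (F ∩ S), hW₀.union (isOpen_sUnion fun V hV => hS V hV.2)⟩ with hΘ
  have hmono : ∀ F₁ F₂ : Set (Set X), F₁ ⊆ F₂ → (Θ F₁).1 ⊆ (Θ F₂).1 := by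
    intro F₁ F₂ h
    exact union_subset_union_right W₀ (sUnion_subset_sUnion (inter_subset_inter_left S h))
  refine @Continuous.mk (Set (Set X)) {U : Set X // IsOpen U} (scottTop (· ⊆ ·))
    (scottTop (fun a b => a.1 ⊆ b.1)) Θ (fun 𝒱 h𝒱 => ?_)
  have h𝒱' : ScottOpenWrt (fun a b : {U : Set X // IsOpen U} => a.1 ⊆ b.1) 𝒱 := h𝒱
  show ScottOpenWrt (· ⊆ ·) (Θ ⁻¹' 𝒱)
  constructor
  · intro F₁ hF₁ F₂ h12
    exact h𝒱'.1 hF₁ (hmono F₁ F₂ h12)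
  · intro D hD s hs hsmem
    have hseq : s = ⋃₀ D := isSupWrt_powerset hs
    have hdirIm : DirectedSubset (fun a b : {U : Set X // IsOpen U} => a.1 ⊆ b.1) (Θ '' D) := by
      constructor
      · obtain ⟨F, hF⟩ := hD.1
        exact ⟨Θ F, mem_image_of_mem Θ hF⟩
      · rintro _ ⟨F₁, hF₁, rfl⟩ _ ⟨F₂, hF₂, rfl⟩
        obtain ⟨F₃, hF₃, h13, h23⟩ := hD.2 F₁ hF₁ F₂ hF₂
        exact ⟨Θ F₃, mem_image_of_mem Θ hF₃, hmono _ _ h13, hmono _ _ h23⟩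
    have hsupIm : IsSupWrt (fun a b : {U : Set X // IsOpen U} => a.1 ⊆ b.1) (Θ '' D) (Θ s) := by
      constructor
      · rintro _ ⟨F, hF, rfl⟩
        exact hmono _ _ (hs.1 F hF)
      · intro t ht
        subst hseq
        rintro x (hx | hx)
        · obtain ⟨F₀, hF₀⟩ := hD.1
          exact ht (Θ F₀) (mem_image_of_mem Θ hF₀) (Or.inl hx)
        · obtain ⟨A, ⟨⟨F, hFD, hAF⟩, hAS⟩, hxA⟩ := hx
          exact ht (Θ F) (mem_image_of_mem Θ hFD) (Or.inr ⟨A, ⟨hAF, hAS⟩, hxA⟩)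
    obtain ⟨b, ⟨F, hFD, rfl⟩, hb⟩ := h𝒱'.2 (Θ '' D) hdirIm (Θ s) hsupIm hsmem
    exact ⟨F, hFD, hb⟩

end Theta
section Backward

variable {X : Type u} [tX : TopologicalSpace X]

lemma mem_of_val_eq {𝒰 : Set {U : Set X // IsOpen U}} {x y : {U : Set X // IsOpen U}}
    (h : x ∈ 𝒰) (hxy : x.1 = y.1) : y ∈ 𝒰 := by
  have : x = y := Subtype.ext hxy
  rwa [this] at h

lemma ccgOpen_scott_upper {𝒰 : Set {U : Set X // IsOpen U}}
    (h𝒰 : @ccgOpen {U : Set X // IsOpen U} (scottTop (fun a b => a.1 ⊆ b.1)) 𝒰)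
    {a b : {U : Set X // IsOpen U}} (ha : a ∈ 𝒰) (hab : a.1 ⊆ b.1) : b ∈ 𝒰 := by
  have hSb : ∀ V ∈ ({b.1} : Set (Set X)), IsOpen V := by
    rintro V hV
    rw [mem_singleton_iff] at hV
    subst hV; exact b.2
  have hpre := h𝒰 (Set (Set X)) (scottTop (· ⊆ ·)) coreCompact_powerset _
    (theta_continuous a.1 a.2 {b.1} hSb)
  have hpre' : ScottOpenWrt (· ⊆ ·)
      ((fun F => (⟨a.1 ∪ ⋃₀ (F ∩ {b.1}),
        a.2.union (isOpen_sUnion fun V hV => hSb V hV.2)⟩ : {U : Set X // IsOpen U})) ⁻¹' 𝒰) :=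
    hpre
  have h0 : (∅ : Set (Set X)) ∈ (fun F => (⟨a.1 ∪ ⋃₀ (F ∩ {b.1}),
      a.2.union (isOpen_sUnion fun V hV => hSb V hV.2)⟩ : {U : Set X // IsOpen U})) ⁻¹' 𝒰 := by
    show _ ∈ 𝒰
    exact mem_of_val_eq ha (by simp)
  have h1 := hpre'.1 h0 (subset_univ (∅ : Set (Set X)))
  have h1' : (⟨a.1 ∪ ⋃₀ ((univ : Set (Set X)) ∩ {b.1}),
      a.2.union (isOpen_sUnion fun V hV => hSb V hV.2)⟩ : {U : Set X // IsOpen U}) ∈ 𝒰 := h1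
  refine mem_of_val_eq h1' ?_
  show a.1 ∪ ⋃₀ ((univ : Set (Set X)) ∩ {b.1}) = b.1
  rw [univ_inter, sUnion_singleton]
  exact union_eq_self_of_subset_left hab

lemma ccgOpen_scott_finite {𝒰 : Set {U : Set X // IsOpen U}}
    (h𝒰 : @ccgOpen {U : Set X // IsOpen U} (scottTop (fun a b => a.1 ⊆ b.1)) 𝒰)
    {S : Set (Set X)} (hS : ∀ V ∈ S, IsOpen V)
    (hmem : (⟨⋃₀ S, isOpen_sUnion hS⟩ : {U : Set X // IsOpen U}) ∈ 𝒰) :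
    ∃ F : Set (Set X), F.Finite ∧
      ∀ h : IsOpen (⋃₀ (F ∩ S)), (⟨⋃₀ (F ∩ S), h⟩ : {U : Set X // IsOpen U}) ∈ 𝒰 := by
  have hpre := h𝒰 (Set (Set X)) (scottTop (· ⊆ ·)) coreCompact_powerset _
    (theta_continuous ∅ isOpen_empty S hS)
  have hpre' : ScottOpenWrt (· ⊆ ·)
      ((fun F => (⟨∅ ∪ ⋃₀ (F ∩ S),
        isOpen_empty.union (isOpen_sUnion fun V hV => hS V hV.2)⟩ :
          {U : Set X // IsOpen U})) ⁻¹' 𝒰) := hpre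
  have huniv : (univ : Set (Set X)) ∈ (fun F => (⟨∅ ∪ ⋃₀ (F ∩ S),
      isOpen_empty.union (isOpen_sUnion fun V hV => hS V hV.2)⟩ :
        {U : Set X // IsOpen U})) ⁻¹' 𝒰 := by
    show _ ∈ 𝒰
    exact mem_of_val_eq hmem (by simp)
  have hdir : DirectedSubset (· ⊆ ·) {F : Set (Set X) | F.Finite} :=
    ⟨⟨∅, finite_empty⟩, fun a ha b hb =>
      ⟨a ∪ b, ha.union hb, subset_union_left, subset_union_right⟩⟩
  have hsup : IsSupWrt (· ⊆ ·) {F : Set (Set X) | F.Finite} univ := by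
    refine ⟨fun d _ => subset_univ d, fun t ht x _ => ?_⟩
    exact ht {x} (finite_singleton x) rfl
  obtain ⟨F₀, hF₀fin, hF₀⟩ := hpre'.2 _ hdir univ hsup huniv
  have hF₀' : (⟨∅ ∪ ⋃₀ (F₀ ∩ S),
      isOpen_empty.union (isOpen_sUnion fun V hV => hS V hV.2)⟩ :
        {U : Set X // IsOpen U}) ∈ 𝒰 := hF₀
  exact ⟨F₀, hF₀fin, fun h => mem_of_val_eq hF₀' (by simp)⟩

lemma mem_open_probe {C : Type u} [tC : TopologicalSpace C]
    (hc : CoreCompact C) (ρ₁ : C → X) (hρ₁ : Continuous ρ₁)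
    (ρ₂ : C → {U : Set X // IsOpen U})
    (hρ₂ : @Continuous C {U : Set X // IsOpen U} tC
      (scottTop (fun a b => a.1 ⊆ b.1)) ρ₂) :
    IsOpen {c : C | ρ₁ c ∈ (ρ₂ c).1} := by
  rw [isOpen_iff_forall_mem_open]
  intro c₀ hc₀
  have hP : IsOpen (ρ₁ ⁻¹' (ρ₂ c₀).1) := (ρ₂ c₀).2.preimage hρ₁
  obtain ⟨N, hN, hc₀N, hNP⟩ := hc _ hP c₀ hc₀
  obtain ⟨M, hM, hNM, hMP⟩ := wayBelow_interpolate hc hP hNP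
  set 𝒲 : Set {U : Set X // IsOpen U} := {a | ∃ M' N'', IsOpen M' ∧ IsOpen N'' ∧
    WayBelow N M' ∧ WayBelow M' N'' ∧ N'' ⊆ ρ₁ ⁻¹' a.1} with h𝒲def
  have hWsc : ScottOpenWrt (fun a b : {U : Set X // IsOpen U} => a.1 ⊆ b.1) 𝒲 := by
    constructor
    · rintro a ⟨M', N'', h1, h2, h3, h4, h5⟩ b hab
      exact ⟨M', N'', h1, h2, h3, h4, h5.trans (preimage_mono hab)⟩
    · intro D hD s hs hsmem
      obtain ⟨M', N'', hM', hN'', h3, h4, h5⟩ := hsmem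
      have hseq := isSupWrt_opens hs
      have hcov : N'' ⊆ ⋃₀ ((fun d : {U : Set X // IsOpen U} => ρ₁ ⁻¹' d.1) '' D) := by
        intro c hcN
        have hmem : ρ₁ c ∈ s.1 := h5 hcN
        rw [hseq] at hmem
        obtain ⟨d, hdD, hmem'⟩ := mem_iUnion₂.1 hmem
        exact ⟨ρ₁ ⁻¹' d.1, mem_image_of_mem _ hdD, hmem'⟩
      obtain ⟨F, hFT, hMF⟩ := h4 ((fun d : {U : Set X // IsOpen U} => ρ₁ ⁻¹' d.1) '' D)
        (by rintro W ⟨d, hdD, rfl⟩; exact d.2.preimage hρ₁) hcov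
      obtain ⟨d', hd'D, hall⟩ := directed_bound_finset
        (fun a b c hab hbc => hab.trans hbc) hD F
        (fun W d => W = ρ₁ ⁻¹' d.1)
        (fun W hW => by
          obtain ⟨d, hdD, heq⟩ := hFT hW
          exact ⟨d, hdD, heq.symm⟩)
      have hMd' : M' ⊆ ρ₁ ⁻¹' d'.1 := by
        intro c hcM
        obtain ⟨W, hWF, hcW⟩ := hMF hcM
        obtain ⟨d, _, hWd, hled⟩ := hall W hWF
        subst hWd
        exact preimage_mono hled hcW
      obtain ⟨M2, hM2, hNM2, hM2M'⟩ := wayBelow_interpolate hc hM' h3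
      exact ⟨d', hd'D, M2, M', hM2, hM', hNM2, hM2M', hMd'⟩
  have hWopen : @IsOpen {U : Set X // IsOpen U} (scottTop (fun a b => a.1 ⊆ b.1)) 𝒲 := hWsc
  refine ⟨N ∩ ρ₂ ⁻¹' 𝒲, ?_, hN.inter
    (@Continuous.isOpen_preimage C {U : Set X // IsOpen U} tC
      (scottTop (fun a b => a.1 ⊆ b.1)) ρ₂ hρ₂ 𝒲 hWopen), hc₀N,
    ⟨M, ρ₁ ⁻¹' (ρ₂ c₀).1, hM, hP, hNM, hMP, Subset.rfl⟩⟩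
  rintro c ⟨hcN, hc𝒲⟩
  obtain ⟨M', N'', h1, h2, h3, h4, h5⟩ := hc𝒲
  exact h5 (wayBelow_subset h4 h2 (wayBelow_subset h3 h1 hcN))

end Backward
/-- a core compactly generated space `X` is core compact iff for every core
compactly generated space `Y` the product topology on `X × Y` coincides with the core
compactly generated topology of `X × Y`. -/
theorem stmt18 {X : Type u} [tX : TopologicalSpace X] (hX : CCGenerated X) :
    CoreCompact X ↔
      ∀ (Y : Type u) (tY : TopologicalSpace Y), @CCGenerated Y tY →
        @CCGenerated (X × Y) (@instTopologicalSpaceProd X Y tX tY) := by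
  constructor
  · -- forward direction (Escardó–Lawson–Simpson)
    intro hcc Y tY hY
    apply TopologicalSpace.ext_iff.2
    intro W
    constructor
    · intro hW0
      have hW : ccgOpen (X × Y) W := hW0
      rw [isOpen_iff_forall_mem_open]
      rintro ⟨x₀, y₀⟩ hmem
      have hg : Continuous (fun x : X => ((x, y₀) : X × Y)) :=
        continuous_id.prodMk continuous_const
      have hslice : IsOpen {x : X | (x, y₀) ∈ W} := hW X tX hcc _ hg
      obtain ⟨V, hV, hxV, hVSl⟩ := hcc _ hslice x₀ hmem
      set OV : Set Y := {y | ∃ V', IsOpen V' ∧ WayBelow V V' ∧ ∀ x ∈ V', (x, y) ∈ W}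
        with hOVdef
      have hOVc : @IsOpen Y (@ccgTopology Y tY) OV := by
        show ccgOpen Y OV
        intro C tC hcC ρ hρ
        letI := tC
        rw [isOpen_iff_forall_mem_open]
        intro c₀ hc₀
        obtain ⟨V', hV', hVV', hsub⟩ := hc₀
        obtain ⟨V'', hV'', hVV'', hV2V'⟩ := wayBelow_interpolate hcc hV' hVV'
        have hGm : Continuous (fun p : X × C => ((p.1, ρ p.2) : X × Y)) :=
          continuous_fst.prodMk (hρ.comp continuous_snd)
        have hG : IsOpen ((fun p : X × C => ((p.1, ρ p.2) : X × Y)) ⁻¹' W) :=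
          hW (X × C) instTopologicalSpaceProd (coreCompact_prod hcc hcC) _ hGm
        obtain ⟨B, hB, hc₀B, htube⟩ := half_tube hG hV2V' (fun x hx => hsub x hx)
        exact ⟨B, fun c hcB => ⟨V'', hV'', hVV'', fun x hx => htube x hx c hcB⟩, hB, hc₀B⟩
      have hOV : IsOpen OV := by rwa [hY] at hOVc
      refine ⟨V ×ˢ OV, ?_, hV.prod hOV, hxV, {x | (x, y₀) ∈ W}, hslice, hVSl,
        fun x hx => hx⟩
      rintro ⟨x, y⟩ ⟨hxV', hyO⟩
      obtain ⟨V', hV', hVV', hsub⟩ := hyO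
      exact hsub x (wayBelow_subset hVV' hV' hxV')
    · intro h
      exact ccgOpen_of_isOpen h
  · -- converse, via the Scott topology on the open-set lattice
    intro H U hU x₀ hx₀
    have hY := ccg_ccg {U : Set X // IsOpen U} (scottTop (fun a b => a.1 ⊆ b.1))
    have hprod := H {U : Set X // IsOpen U}
      (@ccgTopology {U : Set X // IsOpen U} (scottTop (fun a b => a.1 ⊆ b.1))) hY
    have hGccg : @ccgOpen (X × {U : Set X // IsOpen U})
        (@instTopologicalSpaceProd X {U : Set X // IsOpen U} tX
          (@ccgTopology {U : Set X // IsOpen U} (scottTop (fun a b => a.1 ⊆ b.1))))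
        {p : X × {U : Set X // IsOpen U} | p.1 ∈ p.2.1} := by
      intro C tC hcC ρ hρ
      letI := tC
      have hρ₁ : Continuous (fun c => (ρ c).1) := by
        have := @Continuous.comp C (X × {U : Set X // IsOpen U}) X tC
          (@instTopologicalSpaceProd X {U : Set X // IsOpen U} tX
            (@ccgTopology {U : Set X // IsOpen U} (scottTop (fun a b => a.1 ⊆ b.1)))) tX
          ρ Prod.fst (@continuous_fst X {U : Set X // IsOpen U} tX
            (@ccgTopology {U : Set X // IsOpen U} (scottTop (fun a b => a.1 ⊆ b.1)))) hρ
        exact this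
      have hρ₂C : @Continuous C {U : Set X // IsOpen U} tC
          (@ccgTopology {U : Set X // IsOpen U} (scottTop (fun a b => a.1 ⊆ b.1)))
          (fun c => (ρ c).2) := by
        have := @Continuous.comp C (X × {U : Set X // IsOpen U}) {U : Set X // IsOpen U} tC
          (@instTopologicalSpaceProd X {U : Set X // IsOpen U} tX
            (@ccgTopology {U : Set X // IsOpen U} (scottTop (fun a b => a.1 ⊆ b.1))))
          (@ccgTopology {U : Set X // IsOpen U} (scottTop (fun a b => a.1 ⊆ b.1)))
          ρ Prod.snd (@continuous_snd X {U : Set X // IsOpen U} tX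
            (@ccgTopology {U : Set X // IsOpen U} (scottTop (fun a b => a.1 ⊆ b.1)))) hρ
        exact this
      have hρ₂ : @Continuous C {U : Set X // IsOpen U} tC
          (scottTop (fun a b : {U : Set X // IsOpen U} => a.1 ⊆ b.1)) (fun c => (ρ c).2) := by
        refine @Continuous.mk C {U : Set X // IsOpen U} tC
          (scottTop (fun a b => a.1 ⊆ b.1)) (fun c => (ρ c).2) (fun O hO => ?_)
        have hO' : @IsOpen {U : Set X // IsOpen U}
            (@ccgTopology {U : Set X // IsOpen U} (scottTop (fun a b => a.1 ⊆ b.1))) O :=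
          @ccgOpen_of_isOpen {U : Set X // IsOpen U} (scottTop (fun a b => a.1 ⊆ b.1)) O hO
        exact @Continuous.isOpen_preimage C {U : Set X // IsOpen U} tC
          (@ccgTopology {U : Set X // IsOpen U} (scottTop (fun a b => a.1 ⊆ b.1)))
          (fun c => (ρ c).2) hρ₂C O hO'
      exact mem_open_probe hcC _ hρ₁ _ hρ₂
    have hGc2 : @IsOpen (X × {U : Set X // IsOpen U})
        (@ccgTopology (X × {U : Set X // IsOpen U})
          (@instTopologicalSpaceProd X {U : Set X // IsOpen U} tX
            (@ccgTopology {U : Set X // IsOpen U} (scottTop (fun a b => a.1 ⊆ b.1)))))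
        {p : X × {U : Set X // IsOpen U} | p.1 ∈ p.2.1} := hGccg
    rw [hprod] at hGc2
    obtain ⟨V, 𝒰, hV, h𝒰, hx₀V, hU𝒰, hVsub⟩ :=
      (@isOpen_prod_iff X {U : Set X // IsOpen U} tX
        (@ccgTopology {U : Set X // IsOpen U} (scottTop (fun a b => a.1 ⊆ b.1))) _).1 hGc2
        x₀ ⟨U, hU⟩ hx₀
    have h𝒰' : @ccgOpen {U : Set X // IsOpen U} (scottTop (fun a b => a.1 ⊆ b.1)) 𝒰 := h𝒰
    refine ⟨V, hV, hx₀V, ?_⟩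
    intro S hS hc
    have hup : (⟨⋃₀ S, isOpen_sUnion hS⟩ : {U : Set X // IsOpen U}) ∈ 𝒰 :=
      ccgOpen_scott_upper h𝒰' hU𝒰 hc
    obtain ⟨F₀, hF₀fin, hF₀⟩ := ccgOpen_scott_finite h𝒰' hS hup
    have hopen : IsOpen (⋃₀ (F₀ ∩ S)) := isOpen_sUnion fun V' hV' => hS V' hV'.2
    have hmemF : (⟨⋃₀ (F₀ ∩ S), hopen⟩ : {U : Set X // IsOpen U}) ∈ 𝒰 := hF₀ hopen
    have hVsub' : V ⊆ ⋃₀ (F₀ ∩ S) := fun x hx =>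
      hVsub (show ((x, (⟨⋃₀ (F₀ ∩ S), hopen⟩ : {U : Set X // IsOpen U})) :
        X × {U : Set X // IsOpen U}) ∈ V ×ˢ 𝒰 from ⟨hx, hmemF⟩)
    refine ⟨(hF₀fin.inter_of_left S).toFinset, ?_, ?_⟩
    · intro W hW
      rw [Set.Finite.coe_toFinset] at hW
      exact hW.2
    · rwa [Set.Finite.coe_toFinset]
end
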